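/- arXiv:1811.01664 — 4 statements merged into one kernel-verified Lean document; each statement's English description precedes it below -/
import Mathlib

section
/- Let γ : [x,∞) → [0,1) be measurable, let X : [0,∞) → ℝ be a càdlàg function without upward jumps with X_0 = x and running maximum X̄, and define the latent tax process U_t = X_t - ∫_{(0,t]} γ(X̄_s) dX̄_s. Define γ̄_x(s) = x + ∫_x^s (1 - γ(y)) dy for s ≥ x. Then the running maximum of U satisfies Ū_t = γ̄_x(X̄_t) for all t ≥ 0. -/
open MeasureTheory Set Filter

open Topology

/-- Running maximum of a path on `[0, t]`. -/
noncomputable def runMax (X : ℝ → ℝ) (t : ℝ) : ℝ := sSup (X '' Set.Icc 0 t)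

theorem myBddAbove (X : ℝ → ℝ)
    (hrc : ∀ t ≥ (0:ℝ), ContinuousWithinAt X (Set.Ici t) t)
    (hll : ∀ t > (0:ℝ), ∃ l : ℝ, Tendsto X (nhdsWithin t (Set.Iio t)) (nhds l))
    {t : ℝ} : BddAbove (X '' Set.Icc 0 t) := by
  rcases le_or_gt t 0 with h | h
  · rcases lt_or_eq_of_le h with h | h
    · simp [Set.Icc_eq_empty_of_lt h]
    · subst h; simp [bddAbove_singleton]
  have key : ∀ s ∈ Set.Icc (0:ℝ) t, ∃ V, V ∈ 𝓝 s ∧ BddAbove (X '' (V ∩ Set.Icc 0 t)) := by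
    intro s hs
    have h1 : X ⁻¹' Set.Iio (X s + 1) ∈ nhdsWithin s (Set.Ici s) :=
      (hrc s hs.1) (Iio_mem_nhds (lt_add_one _))
    rcases mem_nhdsWithin.1 h1 with ⟨V1, hV1o, hV1s, hV1⟩
    rcases eq_or_lt_of_le hs.1 with hs0 | hs0
    · refine ⟨V1, hV1o.mem_nhds hV1s, ⟨X s + 1, ?_⟩⟩
      rintro _ ⟨u, ⟨huV, hu0, _⟩, rfl⟩
      exact (hV1 ⟨huV, by rw [← hs0]; exact hu0⟩).le
    · obtain ⟨l, hl⟩ := hll s hs0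
      have h2 : X ⁻¹' Set.Iio (l + 1) ∈ nhdsWithin s (Set.Iio s) :=
        hl (Iio_mem_nhds (lt_add_one _))
      rcases mem_nhdsWithin.1 h2 with ⟨V2, hV2o, hV2s, hV2⟩
      refine ⟨V1 ∩ V2, Filter.inter_mem (hV1o.mem_nhds hV1s) (hV2o.mem_nhds hV2s),
        ⟨max (X s + 1) (l + 1), ?_⟩⟩
      rintro _ ⟨u, ⟨⟨h1u, h2u⟩, _, _⟩, rfl⟩
      rcases le_or_gt s u with hc | hc
      · exact le_max_of_le_left (hV1 ⟨h1u, hc⟩).le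
      · exact le_max_of_le_right (hV2 ⟨h2u, hc⟩).le
  choose! V hV hB using key
  obtain ⟨ι, hιsub, hcover⟩ :=
    (isCompact_Icc (a := (0:ℝ)) (b := t)).elim_nhds_subcover V (fun s hs => hV s hs)
  have hsub : X '' Set.Icc 0 t ⊆ ⋃ s ∈ ι, X '' (V s ∩ Set.Icc 0 t) := by
    rintro _ ⟨u, hu, rfl⟩
    rcases Set.mem_iUnion₂.1 (hcover hu) with ⟨s, hsι, hus⟩
    exact Set.mem_iUnion₂.2 ⟨s, hsι, ⟨u, ⟨hus, hu⟩, rfl⟩⟩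
  refine BddAbove.mono hsub ?_
  exact (Set.Finite.bddAbove_biUnion (ι.finite_toSet)).2 fun s hsι => hB s (hιsub s hsι)

theorem myXle (X : ℝ → ℝ) {s t : ℝ} (bdd : BddAbove (X '' Set.Icc 0 t))
    (hs : s ∈ Set.Icc 0 t) : X s ≤ runMax X t :=
  le_csSup bdd ⟨s, hs, rfl⟩

theorem myMono (X : ℝ → ℝ) {s t : ℝ} (bdd : BddAbove (X '' Set.Icc 0 t))
    (hs0 : 0 ≤ s) (hst : s ≤ t) : runMax X s ≤ runMax X t :=
  csSup_le_csSup bdd ⟨X 0, ⟨0, ⟨le_refl 0, hs0⟩, rfl⟩⟩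
    (Set.image_mono (Set.Icc_subset_Icc_right hst))

theorem myRunMaxZero (X : ℝ → ℝ) : runMax X 0 = X 0 := by
  simp [runMax]

theorem myLeftTendsto (X : ℝ → ℝ)
    (hrc : ∀ t ≥ (0:ℝ), ContinuousWithinAt X (Set.Ici t) t)
    (hll : ∀ t > (0:ℝ), ∃ l : ℝ, Tendsto X (nhdsWithin t (Set.Iio t)) (nhds l))
    (hnuj : ∀ t > (0:ℝ), ∀ l : ℝ,
      Tendsto X (nhdsWithin t (Set.Iio t)) (nhds l) → X t ≤ l)
    {b : ℝ} (hb : 0 < b) :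
    Tendsto (runMax X) (𝓝[<] b) (𝓝 (runMax X b)) := by
  rw [Metric.tendsto_nhdsWithin_nhds]
  intro ε hε
  obtain ⟨l, hl⟩ := hll b hb
  have hXb : X b ≤ l := hnuj b hb l hl
  have h2 : X ⁻¹' Metric.ball l (ε / 4) ∈ 𝓝[<] b :=
    hl (Metric.ball_mem_nhds l (by positivity))
  obtain ⟨u0, hu0b, hu0⟩ := (mem_nhdsLT_iff_exists_Ioo_subset).1 h2
  set u1 : ℝ := max u0 0 with hu1
  have hu1b : u1 < b := max_lt hu0b hb
  refine ⟨b - u1, by linarith, ?_⟩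
  intro v hvb hdist
  have hv1 : u1 < v := by
    rw [Real.dist_eq, abs_of_neg (by simp at hvb; linarith)] at hdist
    linarith
  have hv0 : 0 ≤ v := le_of_lt (lt_of_le_of_lt (le_max_right u0 0) hv1)
  have hvb' : v < b := hvb
  have hvIoo : v ∈ Set.Ioo u0 b := ⟨lt_of_le_of_lt (le_max_left u0 0) hv1, hvb'⟩
  have hXv : dist (X v) l < ε / 4 := hu0 hvIoo
  have hub : runMax X v ≤ runMax X b := myMono X (myBddAbove X hrc hll) hv0 hvb'.le
  have hlb : runMax X b ≤ runMax X v + ε / 2 := by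
    show sSup (X '' Set.Icc 0 b) ≤ _
    have hne : (X '' Set.Icc 0 b).Nonempty := ⟨X 0, ⟨0, ⟨le_refl 0, hb.le⟩, rfl⟩⟩
    apply csSup_le hne
    rintro _ ⟨u, hu, rfl⟩
    rcases le_or_gt u v with hc | hc
    · have := myXle X (myBddAbove X hrc hll) ⟨hu.1, hc⟩
      linarith
    · have hXvle : X v ≤ runMax X v := myXle X (myBddAbove X hrc hll) ⟨hv0, le_refl v⟩
      rw [Real.dist_eq, abs_lt] at hXv
      rcases eq_or_lt_of_le hu.2 with hub' | hub'
      · subst hub'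
        linarith
      · have huIoo : u ∈ Set.Ioo u0 b := ⟨lt_trans hvIoo.1 hc, hub'⟩
        have := hu0 huIoo
        rw [Set.mem_preimage, Metric.mem_ball, Real.dist_eq, abs_lt] at this
        linarith
  rw [Real.dist_eq, abs_lt]
  constructor <;> linarith

theorem myFContAt (X : ℝ → ℝ)
    (hrc : ∀ t ≥ (0:ℝ), ContinuousWithinAt X (Set.Ici t) t)
    (hll : ∀ t > (0:ℝ), ∃ l : ℝ, Tendsto X (nhdsWithin t (Set.Iio t)) (nhds l))
    (hnuj : ∀ t > (0:ℝ), ∀ l : ℝ,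
      Tendsto X (nhdsWithin t (Set.Iio t)) (nhds l) → X t ≤ l)
    (F : StieltjesFunction ℝ) (hF : ∀ t ≥ (0:ℝ), F t = runMax X t)
    {b : ℝ} (hb : 0 < b) : ContinuousAt F b := by
  rw [continuousAt_iff_continuous_left_right]
  refine ⟨?_, F.right_continuous b⟩
  rw [← continuousWithinAt_Iio_iff_Iic]
  have hEv : (runMax X) =ᶠ[𝓝[<] b] F := by
    filter_upwards [Ioo_mem_nhdsLT_of_mem (show b ∈ Set.Ioc 0 b from ⟨hb, le_refl b⟩)]
      with u hu
    exact (hF u hu.1.le).symm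
  have : Tendsto F (𝓝[<] b) (𝓝 (runMax X b)) :=
    (myLeftTendsto X hrc hll hnuj hb).congr' hEv
  rw [ContinuousWithinAt, hF b hb.le]
  exact this

theorem myFContOn (X : ℝ → ℝ)
    (hrc : ∀ t ≥ (0:ℝ), ContinuousWithinAt X (Set.Ici t) t)
    (hll : ∀ t > (0:ℝ), ∃ l : ℝ, Tendsto X (nhdsWithin t (Set.Iio t)) (nhds l))
    (hnuj : ∀ t > (0:ℝ), ∀ l : ℝ,
      Tendsto X (nhdsWithin t (Set.Iio t)) (nhds l) → X t ≤ l)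
    (F : StieltjesFunction ℝ) (hF : ∀ t ≥ (0:ℝ), F t = runMax X t)
    {t : ℝ} : ContinuousOn F (Set.Icc 0 t) := by
  intro s hs
  rcases eq_or_lt_of_le hs.1 with hs0 | hs0
  · subst hs0
    exact (F.right_continuous 0).mono (fun u hu => hu.1)
  · exact (myFContAt X hrc hll hnuj F hF hs0).continuousWithinAt

theorem myMap
    (F : StieltjesFunction ℝ)
    (hCA : ∀ b > (0:ℝ), ContinuousAt F b)
    {t : ℝ} (ht : 0 ≤ t) (hcont : ContinuousOn F (Set.Icc 0 t)) :
    Measure.map F (F.measure.restrict (Set.Ioc 0 t)) =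
      (volume : Measure ℝ).restrict (Set.Ioc (F 0) (F t)) := by
  have hmeas : Measurable F := F.mono.measurable
  haveI : IsFiniteMeasure (F.measure.restrict (Set.Ioc 0 t)) := by
    constructor
    rw [Measure.restrict_apply_univ, F.measure_Ioc]
    exact ENNReal.ofReal_lt_top
  haveI : IsFiniteMeasure (Measure.map F (F.measure.restrict (Set.Ioc 0 t))) :=
    Measure.isFiniteMeasure_map _ _
  refine Measure.ext_of_Ioc _ _ fun c d hcd => ?_
  rw [Measure.map_apply hmeas measurableSet_Ioc,
    Measure.restrict_apply (hmeas measurableSet_Ioc),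
    Measure.restrict_apply measurableSet_Ioc,
    Set.Ioc_inter_Ioc, Real.volume_Ioc]
  set S := F ⁻¹' Set.Ioc c d ∩ Set.Ioc 0 t with hSdef
  rcases S.eq_empty_or_nonempty with hSe | hSne
  · rw [hSe, measure_empty]
    symm
    rw [ENNReal.ofReal_eq_zero, sub_nonpos]
    by_contra hpos
    push_neg at hpos
    have hy : min d (F t) ∈ Set.Ioc (F 0) (F t) :=
      ⟨lt_of_le_of_lt (le_max_right c (F 0)) hpos, min_le_right _ _⟩
    obtain ⟨s, hsmem, hFs⟩ := intermediate_value_Ioc ht hcont hy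
    have hsS : s ∈ S := by
      refine ⟨⟨?_, ?_⟩, hsmem⟩
      · rw [hFs]; exact lt_of_le_of_lt (le_max_left c (F 0)) hpos
      · rw [hFs]; exact min_le_left _ _
    rw [hSe] at hsS
    exact hsS
  · have hSsub : S ⊆ Set.Ioc 0 t := Set.inter_subset_right
    have hbdda : BddAbove S := (bddAbove_Ioc).mono hSsub
    have hbddb : BddBelow S := (bddBelow_Ioc).mono hSsub
    set a := sInf S with hadef
    set b := sSup S with hbdef
    obtain ⟨s0, hs0⟩ := id hSne
    have ha0 : 0 ≤ a := le_csInf hSne fun s hs => (hSsub hs).1.le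
    have hbt : b ≤ t := csSup_le hSne fun s hs => (hSsub hs).2
    have hb0 : 0 < b := lt_of_lt_of_le (hSsub hs0).1 (le_csSup hbdda hs0)
    have hab : a ≤ b := (csInf_le hbddb hs0).trans (le_csSup hbdda hs0)
    have hOC : S.OrdConnected :=
      (Set.ordConnected_Ioc.preimage_mono F.mono).inter Set.ordConnected_Ioc
    have hvals : ∀ s ∈ S, c < F s ∧ F s ≤ d := fun s hs => ⟨hs.1.1, hs.1.2⟩
    have haleb : ∀ s ∈ S, F a ≤ F s ∧ F s ≤ F b :=
      fun s hs => ⟨F.mono (csInf_le hbddb hs), F.mono (le_csSup hbdda hs)⟩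
    -- F a = max c (F 0)
    have hFa : F a = max c (F 0) := by
      refine le_antisymm ?_ (max_le ?_ (F.mono ha0))
      · by_contra hgt
        push_neg at hgt
        have hapos : 0 < a := by
          rcases eq_or_lt_of_le ha0 with h | h
          · exfalso
            have : F 0 < F a := lt_of_le_of_lt (le_max_right c (F 0)) hgt
            rw [← h] at this
            exact lt_irrefl _ this
          · exact h
        obtain ⟨δ, hδ, hδ'⟩ := Metric.continuousAt_iff.1 (hCA a hapos) (F a - max c (F 0))
          (by linarith)
        set u : ℝ := max (a / 2) (a - δ / 2) with hudef
        have hua : u < a := max_lt (by linarith) (by linarith)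
        have hu0 : 0 < u := lt_of_lt_of_le (by linarith) (le_max_left _ _)
        have hud : dist u a < δ := by
          rw [Real.dist_eq, abs_of_neg (by linarith)]
          have : a - δ / 2 ≤ u := le_max_right _ _
          linarith
        have hFu := hδ' hud
        rw [Real.dist_eq, abs_lt] at hFu
        have huS : u ∈ S := by
          refine ⟨⟨?_, ?_⟩, ⟨hu0, le_trans hua.le (hab.trans hbt)⟩⟩
          · have : c ≤ max c (F 0) := le_max_left _ _
            linarith [hFu.1]
          · exact le_trans (F.mono hua.le) (le_trans (haleb s0 hs0).1 (hvals s0 hs0).2)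
        exact absurd (csInf_le hbddb huS) (not_le.2 hua)
      · -- c ≤ F a via right continuity
        by_contra hlt
        push_neg at hlt
        obtain ⟨δ, hδ, hδ'⟩ := Metric.continuousWithinAt_iff.1 (F.right_continuous a)
          (c - F a) (by linarith)
        obtain ⟨s1, hs1S, hs1⟩ := exists_lt_of_csInf_lt hSne
          (show sInf S < a + δ by linarith)
        have hs1a : a ≤ s1 := csInf_le hbddb hs1S
        have hs1d : dist s1 a < δ := by
          rw [Real.dist_eq, abs_of_nonneg (by linarith)]
          linarith
        have := hδ' hs1a hs1d
        rw [Real.dist_eq, abs_lt] at this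
        have := (hvals s1 hs1S).1
        linarith
    -- F b = min d (F t)
    have hFb : F b = min d (F t) := by
      refine le_antisymm (le_min ?_ (F.mono hbt)) ?_
      · by_contra hgt
        push_neg at hgt
        obtain ⟨δ, hδ, hδ'⟩ := Metric.continuousAt_iff.1 (hCA b hb0) (F b - d) (by linarith)
        obtain ⟨s2, hs2S, hs2⟩ := exists_lt_of_lt_csSup hSne
          (show b - δ < sSup S by linarith)
        have hs2b : s2 ≤ b := le_csSup hbdda hs2S
        have hs2d : dist s2 b < δ := by
          rw [Real.dist_eq, abs_of_nonpos (by linarith)]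
          linarith
        have := hδ' hs2d
        rw [Real.dist_eq, abs_lt] at this
        have := (hvals s2 hs2S).2
        linarith
      · by_contra hlt
        push_neg at hlt
        have hbd : F b < d := lt_of_lt_of_le hlt (min_le_left _ _)
        have hbFt : F b < F t := lt_of_lt_of_le hlt (min_le_right _ _)
        have hblt : b < t := by
          by_contra hge
          push_neg at hge
          exact absurd (F.mono hge) (not_le.2 hbFt)
        obtain ⟨δ, hδ, hδ'⟩ := Metric.continuousAt_iff.1 (hCA b hb0) (d - F b) (by linarith)
        set u : ℝ := min (b + δ / 2) ((b + t) / 2) with hudef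
        have hbu : b < u := lt_min (by linarith) (by linarith)
        have hut : u ≤ t := le_trans (min_le_right _ _) (by linarith)
        have hud : dist u b < δ := by
          rw [Real.dist_eq, abs_of_pos (by linarith)]
          have : u ≤ b + δ / 2 := min_le_left _ _
          linarith
        have hFu := hδ' hud
        rw [Real.dist_eq, abs_lt] at hFu
        have huS : u ∈ S := by
          refine ⟨⟨?_, by linarith [hFu.2]⟩, ⟨lt_trans hb0 hbu, hut⟩⟩
          · exact lt_of_lt_of_le (hvals s0 hs0).1 (le_trans (haleb s0 hs0).2 (F.mono hbu.le))
        exact absurd (le_csSup hbdda huS) (not_le.2 hbu)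
    -- measure of S
    have hmeasS : F.measure S = ENNReal.ofReal (F b - F a) := by
      have hleftB : Function.leftLim F b = F b := by
        exact leftLim_eq_of_tendsto
          (((hCA b hb0).tendsto).mono_left nhdsWithin_le_nhds)
      refine le_antisymm ?_ ?_
      · by_cases haS : a ∈ S
        · have hapos : 0 < a := (hSsub haS).1
          have hleftA : Function.leftLim F a = F a :=
            leftLim_eq_of_tendsto
              (((hCA a hapos).tendsto).mono_left nhdsWithin_le_nhds)
          have hsub : S ⊆ Set.Icc a b :=
            fun s hs => ⟨csInf_le hbddb hs, le_csSup hbdda hs⟩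
          calc F.measure S ≤ F.measure (Set.Icc a b) := measure_mono hsub
            _ = ENNReal.ofReal (F b - Function.leftLim F a) := F.measure_Icc a b
            _ = ENNReal.ofReal (F b - F a) := by rw [hleftA]
        · have hsub : S ⊆ Set.Ioc a b := fun s hs =>
            ⟨lt_of_le_of_ne (csInf_le hbddb hs) (fun h => haS (h ▸ hs)), le_csSup hbdda hs⟩
          calc F.measure S ≤ F.measure (Set.Ioc a b) := measure_mono hsub
            _ = ENNReal.ofReal (F b - F a) := F.measure_Ioc a b
      · rcases eq_or_lt_of_le hab with heq | hlt
        · rw [← heq, sub_self, ENNReal.ofReal_zero]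
          exact zero_le
        · have hsub : Set.Ioo a b ⊆ S := by
            intro u hu
            obtain ⟨s1, hs1S, hs1⟩ := exists_lt_of_csInf_lt hSne hu.1
            obtain ⟨s2, hs2S, hs2⟩ := exists_lt_of_lt_csSup hSne hu.2
            exact hOC.out hs1S hs2S ⟨hs1.le, hs2.le⟩
          calc ENNReal.ofReal (F b - F a)
              = ENNReal.ofReal (Function.leftLim F b - F a) := by rw [hleftB]
            _ = F.measure (Set.Ioo a b) := (F.measure_Ioo).symm
            _ ≤ F.measure S := measure_mono hsub
    rw [hmeasS, hFa, hFb]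

theorem myKey (x : ℝ) (X : ℝ → ℝ)
    (hX0 : X 0 = x)
    (hrc : ∀ t ≥ (0:ℝ), ContinuousWithinAt X (Set.Ici t) t)
    (hll : ∀ t > (0:ℝ), ∃ l : ℝ, Tendsto X (nhdsWithin t (Set.Iio t)) (nhds l))
    (hnuj : ∀ t > (0:ℝ), ∀ l : ℝ,
      Tendsto X (nhdsWithin t (Set.Iio t)) (nhds l) → X t ≤ l)
    (F : StieltjesFunction ℝ) (hF : ∀ t ≥ (0:ℝ), F t = runMax X t)
    (γ : ℝ → ℝ) (hγmeas : Measurable γ)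
    {s : ℝ} (hs : 0 ≤ s) :
    (∫ u in Set.Ioc 0 s, γ (runMax X u) ∂F.measure) = ∫ y in x..(runMax X s), γ y := by
  have hCA : ∀ b > (0:ℝ), ContinuousAt F b := fun b hb => myFContAt X hrc hll hnuj F hF hb
  have hmap := myMap F hCA hs (myFContOn X hrc hll hnuj F hF)
  have hF0 : F 0 = x := by rw [hF 0 le_rfl, myRunMaxZero, hX0]
  have hFs : F s = runMax X s := hF s hs
  have h1 : (∫ u in Set.Ioc 0 s, γ (runMax X u) ∂F.measure)
      = ∫ u in Set.Ioc 0 s, γ (F u) ∂F.measure :=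
    setIntegral_congr_fun measurableSet_Ioc (fun u hu => by rw [hF u hu.1.le])
  have h2 : (∫ u in Set.Ioc 0 s, γ (F u) ∂F.measure)
      = ∫ y, γ y ∂(Measure.map F (F.measure.restrict (Set.Ioc 0 s))) :=
    (integral_map F.mono.measurable.aemeasurable hγmeas.aestronglyMeasurable).symm
  have hle : F 0 ≤ F s := F.mono hs
  rw [h1, h2, hmap, ← hF0, ← hFs, intervalIntegral.integral_of_le hle]

theorem latent_tax_running_max
    (x : ℝ) (X : ℝ → ℝ)
    (hX0 : X 0 = x)
    (hrc : ∀ t ≥ (0:ℝ), ContinuousWithinAt X (Set.Ici t) t)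
    (hll : ∀ t > (0:ℝ), ∃ l : ℝ, Tendsto X (nhdsWithin t (Set.Iio t)) (nhds l))
    (hnuj : ∀ t > (0:ℝ), ∀ l : ℝ,
      Tendsto X (nhdsWithin t (Set.Iio t)) (nhds l) → X t ≤ l)
    (F : StieltjesFunction ℝ) (hF : ∀ t ≥ (0:ℝ), F t = runMax X t)
    (γ : ℝ → ℝ) (hγmeas : Measurable γ)
    (hγ : ∀ y ≥ x, 0 ≤ γ y ∧ γ y < 1)
    (U : ℝ → ℝ)
    (hU : ∀ t ≥ (0:ℝ), U t = X t - ∫ s in Set.Ioc 0 t, γ (runMax X s) ∂F.measure)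
    (γbar : ℝ → ℝ)
    (hγbar : ∀ s ≥ x, γbar s = x + ∫ y in x..s, (1 - γ y)) :
    ∀ t ≥ (0:ℝ), runMax U t = γbar (runMax X t) := by
  intro t ht
  have bdd : ∀ {r : ℝ}, BddAbove (X '' Set.Icc 0 r) := fun {r} => myBddAbove X hrc hll
  set M := runMax X t with hMdef
  have hxM : x ≤ M := by rw [← hX0]; exact myXle X bdd ⟨le_refl 0, ht⟩
  have hKEY : ∀ s, 0 ≤ s →
      (∫ u in Set.Ioc 0 s, γ (runMax X u) ∂F.measure) = ∫ y in x..(runMax X s), γ y :=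
    fun s hs => myKey x X hX0 hrc hll hnuj F hF γ hγmeas hs
  have hUf : ∀ s ∈ Set.Icc 0 t, U s = X s - ∫ y in x..(runMax X s), γ y :=
    fun s hs => by rw [hU s hs.1, hKEY s hs.1]
  have hIntM : IntervalIntegrable γ volume x M := by
    rw [intervalIntegrable_iff_integrableOn_Ioc_of_le hxM]
    apply Measure.integrableOn_of_bounded (M := 1) measure_Ioc_lt_top.ne
      hγmeas.aestronglyMeasurable
    refine (ae_restrict_iff' measurableSet_Ioc).2 (ae_of_all _ fun y hy => ?_)
    have := hγ y hy.1.le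
    rw [Real.norm_eq_abs, abs_le]
    constructor <;> linarith
  have hIntSub : ∀ r ∈ Set.Icc x M,
      IntervalIntegrable γ volume x r ∧ IntervalIntegrable γ volume r M := by
    intro r hr
    constructor
    · exact hIntM.mono_set (Set.uIcc_subset_uIcc left_mem_uIcc
        (by rw [Set.uIcc_of_le hxM]; exact hr))
    · exact hIntM.mono_set (Set.uIcc_subset_uIcc
        (by rw [Set.uIcc_of_le hxM]; exact hr) right_mem_uIcc)
  have hγbarEq : ∀ r, x ≤ r → IntervalIntegrable γ volume x r →
      γbar r = r - ∫ y in x..r, γ y := by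
    intro r hr hint
    have h1 : (∫ y in x..r, (1 - γ y)) = (r - x) - ∫ y in x..r, γ y := by
      rw [intervalIntegral.integral_sub intervalIntegrable_const hint,
        intervalIntegral.integral_const, smul_eq_mul, mul_one]
    rw [hγbar r hr, h1]; ring
  have hub : ∀ s ∈ Set.Icc 0 t, U s ≤ γbar M := by
    intro s hs
    set r := runMax X s with hrdef
    have hrM : r ≤ M := myMono X bdd hs.1 hs.2
    have hxr : x ≤ r := by rw [← hX0]; exact myXle X bdd ⟨le_refl 0, hs.1⟩
    have hXr : X s ≤ r := myXle X bdd ⟨hs.1, le_refl s⟩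
    have hadj : (∫ y in x..r, γ y) + (∫ y in r..M, γ y) = ∫ y in x..M, γ y :=
      intervalIntegral.integral_add_adjacent_intervals (hIntSub r ⟨hxr, hrM⟩).1
        (hIntSub r ⟨hxr, hrM⟩).2
    have htail : (∫ y in r..M, γ y) ≤ M - r := by
      have hb := intervalIntegral.norm_integral_le_of_norm_le_const (C := 1)
        (f := γ) (a := r) (b := M) ?_
      · rw [Real.norm_eq_abs] at hb
        have h2 := le_abs_self (∫ y in r..M, γ y)
        have h3 : |M - r| = M - r := abs_of_nonneg (by linarith)
        rw [h3, one_mul] at hb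
        linarith
      · intro y hy
        rw [Set.uIoc_of_le hrM] at hy
        have := hγ y (le_trans hxr hy.1.le)
        rw [Real.norm_eq_abs, abs_le]
        constructor <;> linarith
    rw [hUf s hs, hγbarEq M hxM hIntM, ← hrdef]
    linarith
  have hne : (U '' Set.Icc 0 t).Nonempty := ⟨U 0, 0, ⟨le_refl 0, ht⟩, rfl⟩
  have hbddU : BddAbove (U '' Set.Icc 0 t) :=
    ⟨γbar M, by rintro _ ⟨s, hs, rfl⟩; exact hub s hs⟩
  refine le_antisymm (csSup_le hne ?_) ?_
  · rintro _ ⟨s, hs, rfl⟩; exact hub s hs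
  · refine le_of_forall_pos_le_add fun ε hε => ?_
    have hneX : (X '' Set.Icc 0 t).Nonempty := ⟨X 0, 0, ⟨le_refl 0, ht⟩, rfl⟩
    obtain ⟨_, ⟨s, hs, rfl⟩, hXs⟩ := exists_lt_of_lt_csSup hneX
      (show M - ε < sSup (X '' Set.Icc 0 t) from sub_lt_self M hε)
    have hUs := hUf s hs
    have hrM : runMax X s ≤ M := myMono X bdd hs.1 hs.2
    have hxr : x ≤ runMax X s := by rw [← hX0]; exact myXle X bdd ⟨le_refl 0, hs.1⟩
    have hmono2 : (∫ y in x..(runMax X s), γ y) ≤ ∫ y in x..M, γ y := by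
      have hadj : (∫ y in x..(runMax X s), γ y) + (∫ y in (runMax X s)..M, γ y)
          = ∫ y in x..M, γ y :=
        intervalIntegral.integral_add_adjacent_intervals (hIntSub _ ⟨hxr, hrM⟩).1
          (hIntSub _ ⟨hxr, hrM⟩).2
      have h0 : 0 ≤ ∫ y in (runMax X s)..M, γ y :=
        intervalIntegral.integral_nonneg hrM (fun y hy => (hγ y (le_trans hxr hy.1)).1)
      linarith
    have hUm : U s ≤ sSup (U '' Set.Icc 0 t) := le_csSup hbddU ⟨s, hs, rfl⟩
    have hrun : runMax U t = sSup (U '' Set.Icc 0 t) := rfl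
    rw [hγbarEq M hxM hIntM, hrun]
    linarith
end

section
/- Let X be a càdlàg function without upward jumps, X_0 = x, with continuous increasing running maximum X̄. Let γ : [x,∞) → [0,1) be measurable and U_t = X_t - ∫_{(0,t]} γ(X̄_s) dX̄_s the latent tax process. Define δ_x^γ(s) = γ(γ̄_x^{-1}(s)) where γ̄_x(s) = x + ∫_x^s (1-γ(y)) dy. Then U satisfies the natural tax equation: U_t = X_t - ∫_{(0,t]} δ_x^γ(Ū_s) dX̄_s for all t ≥ 0, where Ū_s = sup_{r ≤ s} U_r. -/
open MeasureTheory Set Filter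

lemma cadlag_bddAbove (X : ℝ → ℝ)
    (hrc : ∀ t ≥ (0:ℝ), ContinuousWithinAt X (Set.Ici t) t)
    (hll : ∀ t > (0:ℝ), ∃ l : ℝ, Tendsto X (nhdsWithin t (Set.Iio t)) (nhds l))
    (b : ℝ) : BddAbove (X '' Set.Icc 0 b) := by
  refine isCompact_Icc.induction_on (by simp)
    (fun s t hst h => h.mono (Set.image_mono hst))
    (fun s t hs ht => by rw [Set.image_union]; exact hs.union ht) ?_
  rintro r ⟨hr0, hrb⟩
  rcases eq_or_lt_of_le hr0 with h0 | h0
  · refine ⟨{y | X y ≤ X r + 1}, ?_, ⟨X r + 1, by rintro _ ⟨y, hy, rfl⟩; exact hy⟩⟩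
    have h1 : ∀ᶠ y in nhdsWithin r (Set.Ici r), X y ≤ X r + 1 :=
      (hrc r hr0).eventually_le_const (lt_add_one _)
    exact nhdsWithin_mono r (by rw [← h0]; exact Set.Icc_subset_Ici_self) h1
  · obtain ⟨l, hl⟩ := hll r h0
    set K := max (X r + 1) (l + 1) with hK
    refine ⟨{y | X y ≤ K}, ?_, ⟨K, by rintro _ ⟨y, hy, rfl⟩; exact hy⟩⟩
    have h1 : {y | X y ≤ K} ∈ nhdsWithin r (Set.Ici r) :=
      ((hrc r hr0).eventually_le_const (lt_add_one _)).mono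
        (fun y hy => hy.trans (le_max_left _ _))
    have h2 : {y | X y ≤ K} ∈ nhdsWithin r (Set.Iio r) :=
      (hl.eventually_le_const (lt_add_one _)).mono (fun y hy => hy.trans (le_max_right _ _))
    have h3 : {y | X y ≤ K} ∈ nhds r := by
      rw [← nhdsLT_sup_nhdsGE r]
      exact Filter.mem_sup.2 ⟨h2, h1⟩
    exact nhdsWithin_le_nhds h3
open MeasureTheory Set Filter

lemma stieltjes_map_restrict (F : StieltjesFunction ℝ) (s : ℝ) (hs : 0 ≤ s)
    (hcont : ContinuousOn F (Set.Icc 0 s)) :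
    (F.measure.restrict (Set.Ioc 0 s)).map F
      = volume.restrict (Set.Ioc (F 0) (F s)) := by
  have hFmeas : Measurable F := F.mono.measurable
  have hF0s : F 0 ≤ F s := F.mono hs
  set τ : ℝ → ℝ := fun y => if F 0 ≤ y then sSup {r ∈ Set.Icc 0 s | F r ≤ y} else 0 with hτdef
  have hSclosed : ∀ y, IsClosed {r ∈ Set.Icc 0 s | F r ≤ y} := by
    intro y
    have : {r ∈ Set.Icc 0 s | F r ≤ y} = Set.Icc 0 s ∩ F ⁻¹' (Set.Iic y) := by
      ext r; exact Iff.rfl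
    rw [this]
    exact hcont.preimage_isClosed_of_isClosed isClosed_Icc isClosed_Iic
  have hSbdd : ∀ y, BddAbove {r ∈ Set.Icc 0 s | F r ≤ y} :=
    fun y => (bddAbove_Icc (a := (0:ℝ)) (b := s)).mono (fun r hr => hr.1)
  have hτmem : ∀ y, F 0 ≤ y → τ y ∈ {r ∈ Set.Icc 0 s | F r ≤ y} := by
    intro y hy
    rw [hτdef]; simp only [if_pos hy]
    exact (hSclosed y).csSup_mem ⟨0, ⟨le_rfl, hs⟩, hy⟩ (hSbdd y)
  have hτub : ∀ y r, F 0 ≤ y → r ∈ {r ∈ Set.Icc 0 s | F r ≤ y} → r ≤ τ y := by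
    intro y r hy hr
    rw [hτdef]; simp only [if_pos hy]
    exact le_csSup (hSbdd y) hr
  have hτIcc : ∀ y, τ y ∈ Set.Icc 0 s := by
    intro y
    by_cases hy : F 0 ≤ y
    · exact (hτmem y hy).1
    · rw [hτdef]; simp only [if_neg hy]; exact ⟨le_rfl, hs⟩
  have hFτ : ∀ y, F (τ y) = max (F 0) (min y (F s)) := by
    intro y
    by_cases hy : F 0 ≤ y
    · obtain ⟨⟨hτ0, hτs⟩, hFτy⟩ := hτmem y hy
      have hmax : max (F 0) (min y (F s)) = min y (F s) :=
        max_eq_right (le_min hy hF0s)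
      rw [hmax]
      rcases le_total (F s) y with hsy | hsy
      · have hseq : τ y = s :=
          le_antisymm hτs (hτub y s hy ⟨⟨hs, le_rfl⟩, hsy⟩)
        rw [hseq, min_eq_right hsy]
      · rw [min_eq_left hsy]
        refine le_antisymm hFτy ?_
        by_contra hlt
        push_neg at hlt
        have hτlt : τ y < s := by
          rcases lt_or_eq_of_le hτs with h | h
          · exact h
          · exfalso; rw [h] at hlt; exact absurd hlt (not_lt.2 hsy)
        have hev : ∀ᶠ r in nhdsWithin (τ y) (Set.Ioi (τ y)), F r ≤ y := by
          have := (F.right_continuous (τ y)).eventually_le_const hlt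
          exact nhdsWithin_mono _ Set.Ioi_subset_Ici_self this
        have hev2 : ∀ᶠ r in nhdsWithin (τ y) (Set.Ioi (τ y)), r < s :=
          eventually_nhdsWithin_of_eventually_nhds (Filter.Tendsto.eventually_lt_const hτlt tendsto_id)
        obtain ⟨r, ⟨hr1, hr2⟩, hr3⟩ := ((hev.and hev2).and self_mem_nhdsWithin).exists
        have : r ≤ τ y :=
          hτub y r hy ⟨⟨le_trans (hτIcc y).1 (le_of_lt hr3), hr2.le⟩, hr1⟩
        exact absurd hr3 (not_lt.2 this)
    · push_neg at hy
      rw [hτdef]; simp only [if_neg (not_le.2 hy)]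
      rw [max_eq_left (le_trans (min_le_left _ _) hy.le)]
  have hset : ∀ c d : ℝ, (F ⁻¹' Set.Ioc c d) ∩ Set.Ioc 0 s = Set.Ioc (τ c) (τ d) := by
    intro c d
    ext r
    simp only [Set.mem_inter_iff, Set.mem_preimage, Set.mem_Ioc]
    constructor
    · rintro ⟨⟨hcF, hFd⟩, h0r, hrs⟩
      have hd0 : F 0 ≤ d := le_trans (F.mono h0r.le) hFd
      refine ⟨?_, hτub d r hd0 ⟨⟨h0r.le, hrs⟩, hFd⟩⟩
      by_cases hc : F 0 ≤ c
      · by_contra h; push_neg at h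
        have h2 : F r ≤ F (τ c) := F.mono h
        rw [hFτ c] at h2
        exact absurd hcF (not_lt.2 (le_trans h2 (max_le hc (min_le_left _ _))))
      · rw [hτdef]; simp only [if_neg hc]; exact h0r
    · rintro ⟨hτcr, hrτd⟩
      have hτc0 : (0:ℝ) ≤ τ c := (hτIcc c).1
      have h0r : 0 < r := lt_of_le_of_lt hτc0 hτcr
      have hd0 : F 0 ≤ d := by
        by_contra h
        rw [hτdef] at hrτd; simp only [if_neg h] at hrτd
        linarith
      have hrs : r ≤ s := le_trans hrτd (hτIcc d).2
      refine ⟨⟨?_, ?_⟩, h0r, hrs⟩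
      · by_cases hc : F 0 ≤ c
        · by_contra h; push_neg at h
          exact absurd hτcr (not_lt.2 (hτub c r hc ⟨⟨h0r.le, hrs⟩, h⟩))
        · exact lt_of_lt_of_le (not_le.1 hc) (F.mono h0r.le)
      · refine le_trans (F.mono hrτd) ?_
        rw [hFτ d]
        exact max_le hd0 (min_le_left _ _)
  refine Measure.ext_of_Ioc' _ _ ?_ ?_
  · intro a b _
    rw [Measure.map_apply hFmeas measurableSet_Ioc,
      Measure.restrict_apply (hFmeas measurableSet_Ioc), hset a b,
      StieltjesFunction.measure_Ioc]
    exact ENNReal.ofReal_ne_top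
  · intro a b hab
    rw [Measure.map_apply hFmeas measurableSet_Ioc,
      Measure.restrict_apply (hFmeas measurableSet_Ioc), hset a b,
      StieltjesFunction.measure_Ioc,
      Measure.restrict_apply measurableSet_Ioc, Set.Ioc_inter_Ioc, Real.volume_Ioc,
      hFτ a, hFτ b]
    rcases le_total a (F 0) with h1 | h1
    · rw [max_eq_left (le_trans (min_le_left a (F s)) h1), max_comm a (F 0),
        max_eq_left h1]
      rcases le_total (F 0) (min b (F s)) with h2 | h2
      · rw [max_eq_right h2]
      · rw [max_eq_left h2, sub_self, ENNReal.ofReal_zero]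
        symm; rw [ENNReal.ofReal_eq_zero]; linarith
    · rw [max_comm a (F 0), max_eq_right h1]
      rcases le_total (F s) a with h2 | h2
      · have hb : F s ≤ b := le_trans h2 hab.le
        rw [min_eq_right h2, min_eq_right hb, sub_self, ENNReal.ofReal_zero]
        symm; rw [ENNReal.ofReal_eq_zero]; linarith
      · have hab2 : F 0 ≤ min b (F s) := le_trans h1 (le_min hab.le h2)
        rw [min_eq_left h2, max_eq_right h1, max_eq_right hab2]

theorem latent_is_natural
    (x : ℝ) (X : ℝ → ℝ)
    (hX0 : X 0 = x)
    (hrc : ∀ t ≥ (0:ℝ), ContinuousWithinAt X (Set.Ici t) t)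
    (hll : ∀ t > (0:ℝ), ∃ l : ℝ, Tendsto X (nhdsWithin t (Set.Iio t)) (nhds l))
    (hnuj : ∀ t > (0:ℝ), ∀ l : ℝ,
      Tendsto X (nhdsWithin t (Set.Iio t)) (nhds l) → X t ≤ l)
    (F : StieltjesFunction ℝ) (hF : ∀ t ≥ (0:ℝ), F t = runMax X t)
    (γ : ℝ → ℝ) (hγmeas : Measurable γ)
    (hγ : ∀ y ≥ x, 0 ≤ γ y ∧ γ y < 1)
    -- the latent tax process:
    (U : ℝ → ℝ)
    (hU : ∀ t ≥ (0:ℝ), U t = X t - ∫ s in Set.Ioc 0 t, γ (runMax X s) ∂F.measure)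
    (γbar : ℝ → ℝ)
    (hγbar : ∀ s ≥ x, γbar s = x + ∫ y in x..s, (1 - γ y))
    (γbarInv : ℝ → ℝ)
    (hγbarInv : ∀ s ≥ x, γbarInv (γbar s) = s) :
    -- U satisfies the natural tax equation with rate δ_x^γ = γ ∘ γbarInv:
    ∀ t ≥ (0:ℝ), U t = X t - ∫ s in Set.Ioc 0 t, γ (γbarInv (runMax U s)) ∂F.measure := by
  set μ := F.measure with hμdef
  have hbdd : ∀ b : ℝ, BddAbove (X '' Set.Icc 0 b) := cadlag_bddAbove X hrc hll
  have hne : ∀ b : ℝ, 0 ≤ b → (X '' Set.Icc 0 b).Nonempty :=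
    fun b hb => ⟨X 0, 0, ⟨le_rfl, hb⟩, rfl⟩
  have hM0 : runMax X 0 = x := by
    rw [runMax, Set.Icc_self, Set.image_singleton, csSup_singleton, hX0]
  have hF0 : F 0 = x := by rw [hF 0 le_rfl, hM0]
  have hXle : ∀ u : ℝ, 0 ≤ u → X u ≤ F u := by
    intro u hu
    rw [hF u hu, runMax]
    exact le_csSup (hbdd u) ⟨u, ⟨hu, le_rfl⟩, rfl⟩
  have hFge : ∀ r : ℝ, 0 ≤ r → x ≤ F r := by
    intro r hr; rw [← hF0]; exact F.mono hr
  -- left continuity of F on (0, ∞)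
  have hleft : ∀ r : ℝ, 0 < r → ContinuousWithinAt F (Set.Iio r) r := by
    intro r hr
    rw [F.mono.continuousWithinAt_Iio_iff_leftLim_eq]
    refine le_antisymm (F.mono.leftLim_le le_rfl) ?_
    have hlub : ∀ w ∈ X '' Set.Icc 0 r, w ≤ Function.leftLim F r := by
      rintro _ ⟨u, ⟨hu0, hur⟩, rfl⟩
      rcases lt_or_eq_of_le hur with h | h
      · exact le_trans (hXle u hu0) (F.mono.le_leftLim h)
      · subst h
        obtain ⟨l, hl⟩ := hll u hr
        refine le_trans (hnuj u hr l hl) (le_of_tendsto hl ?_)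
        filter_upwards [Ioo_mem_nhdsLT_of_mem (⟨hr, le_rfl⟩ : u ∈ Set.Ioc 0 u)] with v hv
        exact le_trans (hXle v hv.1.le) (F.mono.le_leftLim hv.2)
    rw [hF r hr.le, runMax]
    exact csSup_le (hne r hr.le) hlub
  have hcontOn : ∀ b : ℝ, 0 ≤ b → ContinuousOn F (Set.Icc 0 b) := by
    intro b hb r hrmem
    rcases eq_or_lt_of_le hrmem.1 with h0 | h0
    · exact ((F.right_continuous r).mono
        (by rw [← h0]; exact Set.Icc_subset_Ici_self))
    · have hca : ContinuousAt F r := continuousAt_iff_continuous_left'_right'.2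
        ⟨hleft r h0, (F.right_continuous r).mono Set.Ioi_subset_Ici_self⟩
      exact hca.continuousWithinAt
  -- integrability
  have hfin : ∀ a b : ℝ, μ (Set.Ioc a b) < ⊤ := by
    intro a b; rw [hμdef, StieltjesFunction.measure_Ioc]; exact ENNReal.ofReal_lt_top
  have hIntM : ∀ a b : ℝ, 0 ≤ a → IntegrableOn (fun u => γ (runMax X u)) (Set.Ioc a b) μ := by
    intro a b ha
    have hmeas : Measurable (fun u => γ (F u)) := hγmeas.comp F.mono.measurable
    haveI : IsFiniteMeasure (μ.restrict (Set.Ioc a b)) :=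
      ⟨by rw [Measure.restrict_apply_univ]; exact hfin a b⟩
    have hIF : IntegrableOn (fun u => γ (F u)) (Set.Ioc a b) μ := by
      refine ⟨hmeas.aestronglyMeasurable.restrict, ?_⟩
      refine HasFiniteIntegral.of_bounded (C := 1)
        (((ae_restrict_iff' measurableSet_Ioc).2 (ae_of_all _ fun u hu => ?_)))
      have hxu : x ≤ F u := hFge u (le_trans ha hu.1.le)
      rw [Real.norm_eq_abs, abs_le]
      exact ⟨by linarith [(hγ _ hxu).1], (hγ _ hxu).2.le⟩
    exact hIF.congr_fun (fun u hu => by dsimp only; rw [hF u (le_trans ha hu.1.le)]) measurableSet_Ioc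
  -- occupation formula
  have hocc : ∀ r : ℝ, 0 ≤ r →
      ∫ u in Set.Ioc 0 r, γ (runMax X u) ∂μ = ∫ y in Set.Ioc x (F r), γ y := by
    intro r hr
    have h1 : ∫ u in Set.Ioc 0 r, γ (runMax X u) ∂μ = ∫ u in Set.Ioc 0 r, γ (F u) ∂μ :=
      setIntegral_congr_fun measurableSet_Ioc (fun u hu => by rw [hF u hu.1.le])
    have h2 : ∫ u in Set.Ioc 0 r, γ (F u) ∂μ
        = ∫ y, γ y ∂((μ.restrict (Set.Ioc 0 r)).map F) :=
      (integral_map F.mono.measurable.aemeasurable hγmeas.aestronglyMeasurable).symm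
    rw [h1, h2, hμdef, stieltjes_map_restrict F r hr (hcontOn r hr), hF0]
  -- splitting and bounds
  have hsplit : ∀ r s : ℝ, 0 ≤ r → r ≤ s →
      ∫ u in Set.Ioc 0 s, γ (runMax X u) ∂μ
        = (∫ u in Set.Ioc 0 r, γ (runMax X u) ∂μ)
          + ∫ u in Set.Ioc r s, γ (runMax X u) ∂μ := by
    intro r s hr hrs
    rw [← Set.Ioc_union_Ioc_eq_Ioc hr hrs]
    exact setIntegral_union (Set.Ioc_disjoint_Ioc_of_le le_rfl) measurableSet_Ioc
      (hIntM 0 r le_rfl) (hIntM r s hr)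
  have hbound : ∀ a b : ℝ, 0 ≤ a → a ≤ b →
      0 ≤ (∫ u in Set.Ioc a b, γ (runMax X u) ∂μ) ∧
        (∫ u in Set.Ioc a b, γ (runMax X u) ∂μ) ≤ F b - F a := by
    intro a b ha hab
    have key : ∀ u ∈ Set.Ioc a b, x ≤ runMax X u := by
      intro u hu
      have := hFge u (le_trans ha hu.1.le)
      rwa [hF u (le_trans ha hu.1.le)] at this
    constructor
    · exact setIntegral_nonneg measurableSet_Ioc (fun u hu => (hγ _ (key u hu)).1)
    · have h1 : (∫ u in Set.Ioc a b, γ (runMax X u) ∂μ)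
          ≤ ∫ _ in Set.Ioc a b, (1:ℝ) ∂μ :=
        setIntegral_mono_on (hIntM a b ha)
          ((integrableOn_const_iff).2 (Or.inr (hfin a b))) measurableSet_Ioc
          (fun u hu => (hγ _ (key u hu)).2.le)
      have h2 : (∫ _ in Set.Ioc a b, (1:ℝ) ∂μ) = F b - F a := by
        rw [setIntegral_const, hμdef, measureReal_def, StieltjesFunction.measure_Ioc,
          ENNReal.toReal_ofReal (sub_nonneg.2 (F.mono hab)), smul_eq_mul, mul_one]
      linarith
  -- running max of U
  have hrunU : ∀ s : ℝ, 0 ≤ s →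
      runMax U s = F s - ∫ u in Set.Ioc 0 s, γ (runMax X u) ∂μ := by
    intro s hs
    set c := ∫ u in Set.Ioc 0 s, γ (runMax X u) ∂μ with hc
    have hub : ∀ r ∈ Set.Icc (0:ℝ) s, U r ≤ F s - c := by
      intro r hr
      rw [hU r hr.1]
      have hXF := hXle r hr.1
      have hs1 := hsplit r s hr.1 hr.2
      have hs2 := hbound r s hr.1 hr.2
      have hFr : F r ≤ F s := F.mono hr.2
      linarith [hs2.2, hs2.1]
    have hUbdd : BddAbove (U '' Set.Icc 0 s) :=
      ⟨F s - c, by rintro _ ⟨r, hr, rfl⟩; exact hub r hr⟩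
    have hUne : (U '' Set.Icc 0 s).Nonempty := ⟨U 0, 0, ⟨le_rfl, hs⟩, rfl⟩
    refine le_antisymm (csSup_le hUne (by rintro _ ⟨r, hr, rfl⟩; exact hub r hr)) ?_
    refine le_of_forall_pos_le_add ?_
    intro ε hε
    have hlt : F s - ε < sSup (X '' Set.Icc 0 s) := by
      rw [hF s hs, runMax] at *
      linarith [hF s hs]
    obtain ⟨_, ⟨r, hr, rfl⟩, hXr⟩ := exists_lt_of_lt_csSup (hne s hs) hlt
    have h1 := hU r hr.1
    have hs1 := hsplit r s hr.1 hr.2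
    have hs2 := (hbound r s hr.1 hr.2).1
    have h3 : U r ≤ runMax U s := le_csSup hUbdd ⟨r, hr, rfl⟩
    rw [h1] at h3
    linarith
  -- value of γbar
  have hγbarval : ∀ m : ℝ, x ≤ m → γbar m = m - ∫ y in Set.Ioc x m, γ y := by
    intro m hm
    rw [hγbar m hm]
    have hint : IntervalIntegrable γ volume x m := by
      rw [intervalIntegrable_iff_integrableOn_Ioc_of_le hm]
      refine ⟨hγmeas.aestronglyMeasurable.restrict, ?_⟩
      haveI : IsFiniteMeasure (volume.restrict (Set.Ioc x m)) :=
        ⟨by rw [Measure.restrict_apply_univ, Real.volume_Ioc]; exact ENNReal.ofReal_lt_top⟩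
      refine HasFiniteIntegral.of_bounded (C := 1)
        (((ae_restrict_iff' measurableSet_Ioc).2 (ae_of_all _ fun u hu => ?_)))
      rw [Real.norm_eq_abs, abs_le]
      exact ⟨by linarith [(hγ _ hu.1.le).1], (hγ _ hu.1.le).2.le⟩
    have h1 : IntervalIntegrable (fun _ : ℝ => (1:ℝ)) volume x m := intervalIntegrable_const
    rw [intervalIntegral.integral_sub h1 hint, intervalIntegral.integral_const,
      intervalIntegral.integral_of_le hm, smul_eq_mul, mul_one]
    ring
  -- conclusion
  intro t ht
  have heq : ∫ s in Set.Ioc 0 t, γ (γbarInv (runMax U s)) ∂μ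
      = ∫ s in Set.Ioc 0 t, γ (runMax X s) ∂μ := by
    refine setIntegral_congr_fun measurableSet_Ioc (fun u hu => ?_)
    have hu0 : (0:ℝ) ≤ u := hu.1.le
    have hFu : x ≤ F u := hFge u hu0
    have hkey : runMax U u = γbar (F u) := by
      rw [hrunU u hu0, hocc u hu0, hγbarval (F u) hFu]
    rw [hkey, hγbarInv (F u) hFu, hF u hu0]
  rw [heq]
  exact hU t ht
end

section
/- Let X be a càdlàg function without upward jumps with X_0 = x, and let δ : [x,∞) → [0,1) be measurable such that the ODE y' = 1 - δ(y), y(0) = x has a unique absolutely continuous solution y. If V solves the natural tax integral equation V_t = X_t - ∫_{(0,t]} δ(V̄_s) dX̄_s (with V̄_s = sup_{r≤s} V_r), then V̄_t = y(X̄_t - x) for all t ≥ 0. -/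
open MeasureTheory Set Filter
open scoped ENNReal

lemma bddAbove_cadlag (X : ℝ → ℝ)
    (hrc : ∀ t ≥ (0:ℝ), ContinuousWithinAt X (Set.Ici t) t)
    (hll : ∀ t > (0:ℝ), ∃ l : ℝ, Tendsto X (nhdsWithin t (Set.Iio t)) (nhds l))
    (T : ℝ) (hT : 0 ≤ T) : ∃ C, ∀ s ∈ Set.Icc (0:ℝ) T, X s ≤ C := by
  set A : Set ℝ := {u | u ∈ Icc (0:ℝ) T ∧ ∃ C, ∀ s ∈ Icc (0:ℝ) u, X s ≤ C} with hA
  have h0A : (0:ℝ) ∈ A := ⟨⟨le_refl _, hT⟩, X 0, by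
    intro s hs
    have : s = 0 := le_antisymm hs.2 hs.1
    simp [this]⟩
  have hAbdd : BddAbove A := ⟨T, fun u hu => hu.1.2⟩
  have hAne : A.Nonempty := ⟨0, h0A⟩
  set u₀ := sSup A with hu₀
  have hu₀0 : 0 ≤ u₀ := le_csSup hAbdd h0A
  have hu₀T : u₀ ≤ T := csSup_le hAne fun u hu => hu.1.2
  -- u₀ ∈ A
  have hu₀A : u₀ ∈ A := by
    rcases eq_or_lt_of_le hu₀0 with h|h
    · rwa [← h]
    · obtain ⟨l, hl⟩ := hll u₀ h
      have hev : ∀ᶠ s in nhdsWithin u₀ (Iio u₀), X s ≤ l + 1 := by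
        filter_upwards [hl (eventually_le_nhds (by linarith : l < l + 1))] with s hs using hs
      rw [eventually_nhdsWithin_iff] at hev
      obtain ⟨ε, hε, hball⟩ := Metric.eventually_nhds_iff.1 hev
      have hm : 0 < min ε u₀ := lt_min hε h
      obtain ⟨u, huA, hu⟩ := exists_lt_of_lt_csSup hAne (by linarith : u₀ - min ε u₀ < u₀)
      obtain ⟨C, hC⟩ := huA.2
      refine ⟨⟨hu₀0, hu₀T⟩, max C (max (l+1) (X u₀)), ?_⟩
      intro s hs
      rcases le_or_gt s u with h1|h1
      · exact le_trans (hC s ⟨hs.1, h1⟩) (le_max_left _ _)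
      · rcases eq_or_lt_of_le hs.2 with h2|h2
        · rw [h2]; exact le_trans (le_max_right _ _) (le_max_right _ _)
        · have : X s ≤ l + 1 := by
            apply hball
            · rw [Real.dist_eq, abs_lt]
              have h3 := min_le_left ε u₀
              have h4 := huA.1.2
              constructor <;> linarith
            · exact h2
          exact le_trans this (le_trans (le_max_left _ _) (le_max_right _ _))
  -- u₀ = T
  rcases eq_or_lt_of_le hu₀T with h|h
  · obtain ⟨-, C, hC⟩ := hu₀A
    exact ⟨C, by rwa [← h]⟩
  · exfalso
    have hev : ∀ᶠ s in nhdsWithin u₀ (Ici u₀), X s ≤ X u₀ + 1 := by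
      filter_upwards [(hrc u₀ hu₀0) (eventually_le_nhds (by linarith : X u₀ < X u₀ + 1))] with s hs using hs
    rw [eventually_nhdsWithin_iff] at hev
    obtain ⟨ε, hε, hball⟩ := Metric.eventually_nhds_iff.1 hev
    set u' := min (u₀ + ε/2) T with hu'
    have hu'u : u₀ < u' := lt_min (by linarith) h
    have hu'A : u' ∈ A := by
      obtain ⟨-, C, hC⟩ := hu₀A
      refine ⟨⟨by linarith, min_le_right _ _⟩, max C (X u₀ + 1), ?_⟩
      intro s hs
      rcases le_or_gt s u₀ with h1|h1
      · exact le_trans (hC s ⟨hs.1, h1⟩) (le_max_left _ _)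
      · have : X s ≤ X u₀ + 1 := by
          apply hball
          · rw [Real.dist_eq, abs_lt]
            have : s ≤ u₀ + ε/2 := le_trans hs.2 (min_le_left _ _)
            constructor <;> linarith
          · exact le_of_lt h1
        exact le_trans this (le_max_right _ _)
    exact absurd (le_csSup hAbdd hu'A) (not_le.2 hu'u)

lemma map_withDensity_eq (μ : Measure ℝ) (t : ℝ) (ht : 0 ≤ t) (d : ℝ → ℝ≥0∞)
    (hd : Measurable d) (W : ℝ → ℝ) (hWm : Monotone W) (hWc : Continuous W)
    (hρ : ∀ b ∈ Icc (0:ℝ) t, ((μ.restrict (Ioc 0 t)).withDensity d) (Ioc 0 b)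
        = ENNReal.ofReal (W b - W 0)) :
    Measure.map W ((μ.restrict (Ioc 0 t)).withDensity d)
      = volume.restrict (Ioc (W 0) (W t)) := by
  set ρ := (μ.restrict (Ioc 0 t)).withDensity d with hρdef
  have hWmeas : Measurable W := hWm.measurable
  have hrestr : ∀ A : Set ℝ, MeasurableSet A → ρ A = ρ (A ∩ Ioc 0 t) := by
    intro A hA
    rw [hρdef, withDensity_apply _ hA, withDensity_apply _ (hA.inter measurableSet_Ioc),
      Measure.restrict_restrict hA, Measure.restrict_restrict (hA.inter measurableSet_Ioc),
      inter_assoc, inter_self]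
  have hfin : ρ univ = ENNReal.ofReal (W t - W 0) := by
    rw [hrestr univ MeasurableSet.univ, univ_inter]
    exact hρ t ⟨ht, le_refl t⟩
  haveI : IsFiniteMeasure ρ := ⟨by rw [hfin]; exact ENNReal.ofReal_lt_top⟩
  haveI : IsFiniteMeasure (Measure.map W ρ) := by
    constructor
    rw [Measure.map_apply hWmeas MeasurableSet.univ]
    exact measure_lt_top _ _
  refine Measure.ext_of_Iic _ _ (fun v => ?_)
  rw [Measure.map_apply hWmeas measurableSet_Iic,
    hrestr _ (hWmeas measurableSet_Iic),
    Measure.restrict_apply measurableSet_Iic, inter_comm (Iic v) _, Ioc_inter_Iic]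
  rcases lt_or_ge v (W 0) with hv|hv
  · have h1 : W ⁻¹' Iic v ∩ Ioc 0 t = ∅ := by
      apply eq_empty_of_forall_notMem
      intro s ⟨hs1, hs2⟩
      exact absurd (le_trans (hWm hs2.1.le) hs1) (not_le.2 hv)
    have h2 : min (W t) v < W 0 := lt_of_le_of_lt (min_le_right _ _) hv
    rw [h1, Ioc_eq_empty (not_lt.2 h2.le), measure_empty, measure_empty]
  rcases le_or_gt (W t) v with hv2|hv2
  · have h1 : W ⁻¹' Iic v ∩ Ioc 0 t = Ioc 0 t := by
      apply inter_eq_self_of_subset_right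
      intro s hs
      exact le_trans (le_trans (hWm hs.2) hv2) (le_refl v)
    rw [h1, hρ t ⟨ht, le_refl t⟩, min_eq_left hv2, Real.volume_Ioc]
  · -- middle case : W 0 ≤ v < W t
    set Sv := {s ∈ Icc (0:ℝ) t | W s ≤ v} with hSv
    have hSvne : (0:ℝ) ∈ Sv := ⟨⟨le_refl _, ht⟩, hv⟩
    have hSvbdd : BddAbove Sv := ⟨t, fun s hs => hs.1.2⟩
    have hSvclosed : IsClosed Sv := by
      have : Sv = Icc 0 t ∩ W ⁻¹' Iic v := by ext s; simp [hSv, and_assoc]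
      rw [this]
      exact isClosed_Icc.inter (isClosed_Iic.preimage hWc)
    set σ := sSup Sv with hσ
    have hσmem : σ ∈ Sv := hSvclosed.csSup_mem ⟨0, hSvne⟩ hSvbdd
    have hσt : σ < t := by
      rcases eq_or_lt_of_le hσmem.1.2 with h|h
      · exact absurd (h ▸ hσmem.2) (not_le.2 hv2)
      · exact h
    have hgt : ∀ s, σ < s → s ≤ t → v < W s := by
      intro s h1 h2
      by_contra hcon
      exact absurd (le_csSup hSvbdd ⟨⟨le_trans hσmem.1.1 h1.le, h2⟩, not_lt.1 hcon⟩) (not_le.2 h1)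
    have hWσ : W σ = v := by
      refine le_antisymm hσmem.2 ?_
      have htend : Tendsto W (nhdsWithin σ (Ioi σ)) (nhds (W σ)) :=
        (hWc.continuousAt).continuousWithinAt
      have hev : ∀ᶠ s in nhdsWithin σ (Ioi σ), v ≤ W s := by
        filter_upwards [Ioc_mem_nhdsGT_of_mem ⟨le_refl σ, hσt⟩] with s hs
        exact (hgt s hs.1 hs.2).le
      exact ge_of_tendsto htend hev
    have h1 : W ⁻¹' Iic v ∩ Ioc 0 t = Ioc 0 σ := by
      ext s
      constructor
      · intro ⟨hs1, hs2⟩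
        refine ⟨hs2.1, ?_⟩
        by_contra hcon
        exact absurd hs1 (not_le.2 (hgt s (not_le.1 hcon) hs2.2))
      · intro hs
        exact ⟨le_trans (hWm hs.2) hσmem.2, hs.1, le_trans hs.2 hσmem.1.2⟩
    rw [h1, hρ σ hσmem.1, hWσ, min_eq_right hv2.le, Real.volume_Ioc]

lemma key_lintegral (μ : Measure ℝ) (t : ℝ) (ht : 0 ≤ t) (d : ℝ → ℝ≥0∞)
    (hd : Measurable d) (W : ℝ → ℝ) (hWm : Monotone W) (hWc : Continuous W)
    (hρ : ∀ b ∈ Icc (0:ℝ) t, ((μ.restrict (Ioc 0 t)).withDensity d) (Ioc 0 b)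
        = ENNReal.ofReal (W b - W 0))
    (g : ℝ → ℝ≥0∞) (hg : Measurable g)
    (hprod : ∀ s ∈ Ioc (0:ℝ) t, d s * g (W s) = 1) :
    ∫⁻ u in Ioc (W 0) (W t), g u = μ (Ioc 0 t) := by
  have hWmeas : Measurable W := hWm.measurable
  calc ∫⁻ u in Ioc (W 0) (W t), g u
      = ∫⁻ u, g u ∂(volume.restrict (Ioc (W 0) (W t))) := rfl
    _ = ∫⁻ u, g u ∂(Measure.map W ((μ.restrict (Ioc 0 t)).withDensity d)) := by
        rw [map_withDensity_eq μ t ht d hd W hWm hWc hρ]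
    _ = ∫⁻ s, g (W s) ∂((μ.restrict (Ioc 0 t)).withDensity d) := by
        rw [lintegral_map hg hWmeas]
    _ = ∫⁻ s, (d s * g (W s)) ∂(μ.restrict (Ioc 0 t)) := by
        have h := lintegral_withDensity_eq_lintegral_mul (μ.restrict (Ioc 0 t)) hd
          (hg.comp hWmeas)
        simpa [Function.comp] using h
    _ = ∫⁻ _ in Ioc 0 t, (1:ℝ≥0∞) ∂μ := by
        refine setLIntegral_congr_fun measurableSet_Ioc ?_
        intro s hs
        exact hprod s hs
    _ = μ (Ioc 0 t) := by rw [setLIntegral_const, one_mul]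

lemma y_integrable (x : ℝ) (δ : ℝ → ℝ) (hδ : ∀ z ≥ x, 0 ≤ δ z ∧ δ z < 1)
    (y : ℝ → ℝ) (hyrange : ∀ t ≥ (0:ℝ), x ≤ y t)
    (hy : ∀ t ≥ (0:ℝ), y t = x + ∫ s in (0:ℝ)..t, (1 - δ (y s))) :
    ∀ b ≥ (0:ℝ), IntervalIntegrable (fun s => 1 - δ (y s)) volume 0 b := by
  set f : ℝ → ℝ := fun s => 1 - δ (y s) with hf
  have hfbd : ∀ s, 0 ≤ s → |f s| ≤ 1 := by
    intro s hs
    have h := hδ _ (hyrange s hs)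
    rw [abs_le]
    constructor <;> simp [hf] <;> linarith [h.1, h.2]
  by_contra hcon
  push_neg at hcon
  obtain ⟨b0, hb00, hb0not⟩ := hcon
  set S : Set ℝ := {b | 0 ≤ b ∧ IntervalIntegrable f volume 0 b} with hS
  have h0S : (0:ℝ) ∈ S := by
    refine ⟨le_rfl, ?_⟩
    rw [intervalIntegrable_iff]
    simp
  have hmono : ∀ b ∈ S, ∀ c, 0 ≤ c → c ≤ b → c ∈ S := by
    intro b hb c hc hcb
    refine ⟨hc, hb.2.mono_set ?_⟩
    rw [uIcc_of_le hc, uIcc_of_le (hc.trans hcb)]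
    exact Icc_subset_Icc_right hcb
  have hSbdd : BddAbove S := by
    refine ⟨b0, fun c hc => ?_⟩
    by_contra hlt
    push_neg at hlt
    exact hb0not (hmono c hc b0 hb00 hlt.le).2
  set T := sSup S with hT
  have hT0 : (0:ℝ) ≤ T := le_csSup hSbdd h0S
  have hnotin : ∀ c > T, ¬ IntervalIntegrable f volume 0 c := by
    intro c hc hint
    exact absurd (le_csSup hSbdd ⟨hT0.trans hc.le, hint⟩) (not_le.2 hc)
  have hyc : ∀ c > T, y c = x := by
    intro c hc
    rw [hy c (hT0.trans hc.le), intervalIntegral.integral_undef (hnotin c hc), add_zero]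
  have hup : AEStronglyMeasurable f (volume.restrict (Ioi T)) := by
    refine AEStronglyMeasurable.congr (f := fun _ => (1 - δ x : ℝ)) (g := f)
      aestronglyMeasurable_const ?_
    refine ((ae_restrict_iff' measurableSet_Ioi).2 (ae_of_all _ fun s hs => ?_))
    show (1 - δ x : ℝ) = f s
    simp only [hf]
    rw [hyc s hs]
  have hPc : ∀ c, c < T → AEStronglyMeasurable f (volume.restrict (Ioc 0 c)) := by
    intro c hcT
    rcases lt_or_ge c 0 with h'|h'
    · rw [Ioc_eq_empty (by linarith), Measure.restrict_empty]
      exact aestronglyMeasurable_zero_measure f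
    · obtain ⟨b, hbS, hcb⟩ := exists_lt_of_lt_csSup ⟨0, h0S⟩ hcT
      have := (hmono b hbS c h' hcb.le).2
      rw [intervalIntegrable_iff_integrableOn_Ioc_of_le h'] at this
      exact this.aestronglyMeasurable
  have hmid : AEStronglyMeasurable f (volume.restrict (Ioo 0 T)) := by
    rcases eq_or_lt_of_le hT0 with h'|h'
    · rw [← h', Ioo_self, Measure.restrict_empty]
      exact aestronglyMeasurable_zero_measure f
    · have hcover : Ioo (0:ℝ) T ⊆ ⋃ n : ℕ, Ioc 0 (T - 1/(n+1)) := by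
        intro s hs
        obtain ⟨n, hn⟩ := exists_nat_one_div_lt (by linarith [hs.2] : (0:ℝ) < T - s)
        exact mem_iUnion.2 ⟨n, hs.1, by linarith⟩
      have hU : AEStronglyMeasurable f (volume.restrict (⋃ n : ℕ, Ioc (0:ℝ) (T - 1/(n+1)))) := by
        rw [aestronglyMeasurable_iUnion_iff]
        intro n
        refine hPc _ (by
          have : (0:ℝ) < 1/(n+1) := by positivity
          linarith)
      exact hU.mono_measure (Measure.restrict_mono hcover le_rfl)
  have hsing : AEStronglyMeasurable f (volume.restrict {T}) := by
    rw [Measure.restrict_eq_zero.2 (Real.volume_singleton)]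
    exact aestronglyMeasurable_zero_measure f
  have hcomb : AEStronglyMeasurable f (volume.restrict (Ioc 0 (T+1))) := by
    have hsub : Ioc (0:ℝ) (T+1) ⊆ (Ioo 0 T ∪ Ioi T) ∪ {T} := by
      intro s hs
      rcases lt_trichotomy s T with h'|h'|h'
      · exact Or.inl (Or.inl ⟨hs.1, h'⟩)
      · exact Or.inr (by simp [h'])
      · exact Or.inl (Or.inr h')
    have hU : AEStronglyMeasurable f (volume.restrict ((Ioo 0 T ∪ Ioi T) ∪ {T})) := by
      rw [aestronglyMeasurable_union_iff, aestronglyMeasurable_union_iff]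
      exact ⟨⟨hmid, hup⟩, hsing⟩
    exact hU.mono_measure (Measure.restrict_mono hsub le_rfl)
  have hfin : IntervalIntegrable f volume 0 (T+1) := by
    rw [intervalIntegrable_iff_integrableOn_Ioc_of_le (by linarith)]
    haveI : IsFiniteMeasure (volume.restrict (Ioc (0:ℝ) (T+1))) :=
      ⟨by rw [Measure.restrict_apply_univ]; exact measure_Ioc_lt_top⟩
    refine ⟨hcomb, ?_⟩
    apply HasFiniteIntegral.of_bounded (C := 1)
    refine (ae_restrict_iff' measurableSet_Ioc).2 (ae_of_all _ fun s hs => ?_)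
    simpa using hfbd s hs.1.le
  exact hnotin (T+1) (by linarith) hfin

theorem natural_tax_running_max
    (x : ℝ) (X : ℝ → ℝ)
    (hX0 : X 0 = x)
    (hrc : ∀ t ≥ (0:ℝ), ContinuousWithinAt X (Set.Ici t) t)
    (hll : ∀ t > (0:ℝ), ∃ l : ℝ, Tendsto X (nhdsWithin t (Set.Iio t)) (nhds l))
    (hnuj : ∀ t > (0:ℝ), ∀ l : ℝ,
      Tendsto X (nhdsWithin t (Set.Iio t)) (nhds l) → X t ≤ l)
    (F : StieltjesFunction ℝ) (hF : ∀ t ≥ (0:ℝ), F t = runMax X t)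
    (δ : ℝ → ℝ) (hδmeas : Measurable δ)
    (hδ : ∀ z ≥ x, 0 ≤ δ z ∧ δ z < 1)
    -- y is the unique absolutely continuous solution of y' = 1 - δ(y), y 0 = x
    -- (solutions stated in equivalent integral form):
    (y : ℝ → ℝ)
    (hyrange : ∀ t ≥ (0:ℝ), x ≤ y t)
    (hy : ∀ t ≥ (0:ℝ), y t = x + ∫ s in (0:ℝ)..t, (1 - δ (y s)))
    (hyuniq : ∀ z : ℝ → ℝ, (∀ t ≥ (0:ℝ), x ≤ z t) →
      (∀ t ≥ (0:ℝ), z t = x + ∫ s in (0:ℝ)..t, (1 - δ (z s))) →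
      ∀ t ≥ (0:ℝ), z t = y t)
    -- V solves the natural tax integral equation:
    (V : ℝ → ℝ)
    (hV : ∀ t ≥ (0:ℝ), V t = X t - ∫ s in Set.Ioc 0 t, δ (runMax V s) ∂F.measure) :
    ∀ t ≥ (0:ℝ), runMax V t = y (runMax X t - x) := by
  clear hyuniq
  -- basic facts about M = runMax X
  have hXb : ∀ T ≥ (0:ℝ), BddAbove (X '' Icc 0 T) := by
    intro T hT
    obtain ⟨C, hC⟩ := bddAbove_cadlag X hrc hll T hT
    exact ⟨C, by rintro v ⟨r, hr, rfl⟩; exact hC r hr⟩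
  have hXne : ∀ T ≥ (0:ℝ), (X '' Icc 0 T).Nonempty :=
    fun T hT => ⟨X 0, ⟨0, ⟨le_rfl, hT⟩, rfl⟩⟩
  have hXleM : ∀ r T, 0 ≤ r → r ≤ T → X r ≤ runMax X T :=
    fun r T hr hrT => le_csSup (hXb T (hr.trans hrT)) ⟨r, ⟨hr, hrT⟩, rfl⟩
  have hM0 : runMax X 0 = x := by
    unfold runMax
    rw [Icc_self, image_singleton, csSup_singleton, hX0]
  have hMmono : ∀ s T, 0 ≤ s → s ≤ T → runMax X s ≤ runMax X T := by
    intro s T hs hT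
    exact csSup_le_csSup (hXb T (hs.trans hT)) (hXne s hs)
      (image_mono (Icc_subset_Icc_right hT))
  have hxM : ∀ T ≥ (0:ℝ), x ≤ runMax X T := fun T hT => hX0 ▸ hXleM 0 T le_rfl hT
  -- continuity of M on [0,∞)
  have hMcont : ∀ u ∈ Ici (0:ℝ), ContinuousWithinAt (runMax X) (Ici 0) u := by
    intro u hu
    rw [Metric.continuousWithinAt_iff]
    intro ε hε
    -- right bound
    have h1 := hrc u hu
    rw [Metric.continuousWithinAt_iff] at h1
    obtain ⟨δr, hδr, hr1⟩ := h1 (ε/2) (by linarith)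
    -- left bound
    have hleft : ∃ δl > 0, ∀ s, 0 ≤ s → u - δl < s → s < u → |runMax X s - runMax X u| < ε := by
      rcases eq_or_lt_of_le (mem_Ici.1 hu) with h'|h'
      · exact ⟨1, one_pos, fun s hs h2 h3 => absurd (lt_of_le_of_lt hs h3) (by rw [← h']; simp)⟩
      · obtain ⟨l, hl⟩ := hll u h'
        have hXul : X u ≤ l := hnuj u h' l hl
        have hev : ∀ᶠ s in nhdsWithin u (Iio u), |X s - l| < ε/4 := by
          have := Metric.tendsto_nhds.1 hl (ε/4) (by linarith)
          filter_upwards [this] with s hs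
          rwa [Real.dist_eq] at hs
        rw [eventually_nhdsWithin_iff] at hev
        obtain ⟨δ₀, hδ₀, hball⟩ := Metric.eventually_nhds_iff.1 hev
        refine ⟨min δ₀ u, lt_min hδ₀ h', fun s hs h2 h3 => ?_⟩
        have hsb : |X s - l| < ε/4 := by
          apply hball
          · rw [Real.dist_eq, abs_lt]
            constructor <;> [linarith [min_le_left δ₀ u]; linarith]
          · exact h3
        have hMsu : runMax X s ≤ runMax X u := hMmono s u hs h3.le
        have hup : runMax X u ≤ runMax X s + ε/2 := by
          apply csSup_le (hXne u hu)
          rintro v ⟨r, hr, rfl⟩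
          rcases le_or_gt r s with hrs|hrs
          · linarith [hXleM r s hr.1 hrs]
          · rcases eq_or_lt_of_le hr.2 with hru|hru
            · -- r = u
              have : X r ≤ l := hru ▸ hXul
              have hXsl : |X s - l| < ε/4 := hsb
              have : X r ≤ X s + ε/4 := by
                rw [abs_lt] at hXsl; linarith
              linarith [hXleM s s hs le_rfl]
            · have hrb : |X r - l| < ε/4 := by
                apply hball
                · rw [Real.dist_eq, abs_lt]
                  constructor <;> [linarith [min_le_left δ₀ u]; linarith]
                · exact hru
              rw [abs_lt] at hrb hsb
              have : X r ≤ X s + ε/2 := by linarith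
              linarith [hXleM s s hs le_rfl]
        rw [abs_lt]
        constructor <;> linarith
    obtain ⟨δl, hδl, hlb⟩ := hleft
    refine ⟨min δr δl, lt_min hδr hδl, fun s hs hd => ?_⟩
    rw [Real.dist_eq] at hd
    rcases le_or_gt u s with hus|hus
    · -- right side
      have hub : runMax X s ≤ runMax X u + ε/2 := by
        apply csSup_le (hXne s hs)
        rintro v ⟨r, hr, rfl⟩
        rcases le_or_gt r u with hru|hru
        · linarith [hXleM r u hr.1 hru]
        · have : dist (X r) (X u) < ε/2 := by
            apply hr1 (le_of_lt hru)
            rw [Real.dist_eq, abs_lt]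
            rw [abs_lt] at hd
            refine ⟨by linarith, ?_⟩
            have h6 := hr.2
            have h7 := min_le_left δr δl
            linarith
          rw [Real.dist_eq, abs_lt] at this
          linarith [hXleM u u hu le_rfl]
      have := hMmono u s hu hus
      rw [Real.dist_eq, abs_lt]
      constructor <;> linarith
    · rw [Real.dist_eq]
      apply hlb s hs _ hus
      rw [abs_lt] at hd
      linarith [min_le_right δr δl]
  -- F facts
  have hF0 : F 0 = x := by rw [hF 0 le_rfl, hM0]
  have hFM : ∀ T ≥ (0:ℝ), F.measure (Ioc 0 T) = ENNReal.ofReal (runMax X T - x) := by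
    intro T hT
    rw [StieltjesFunction.measure_Ioc, hF T hT, hF0]
  have hFfin : ∀ T, F.measure (Ioc 0 T) < ⊤ := by
    intro T
    rw [StieltjesFunction.measure_Ioc]
    exact ENNReal.ofReal_lt_top

  -- I, V basic facts
  set I : ℝ → ℝ := fun r => ∫ s in Ioc 0 r, δ (runMax V s) ∂F.measure with hIdef
  have hI0 : I 0 = 0 := by simp [hIdef, Ioc_self]
  have hVI : ∀ r, 0 ≤ r → V r = X r - I r := fun r hr => hV r hr
  have hV0 : V 0 = x := by rw [hVI 0 le_rfl, hI0, hX0, sub_zero]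
  set K : ℝ := max 1 |δ 0| with hK
  have hK0 : (0:ℝ) ≤ K := le_trans zero_le_one (le_max_left _ _)
  have hgK : ∀ s : ℝ, |δ (runMax V s)| ≤ K := by
    intro s
    by_cases hb : BddAbove (V '' Icc 0 s) ∧ 0 ≤ s
    · have hx' : x ≤ runMax V s := by
        rw [← hV0]
        exact le_csSup hb.1 ⟨0, ⟨le_rfl, hb.2⟩, rfl⟩
      have h2 := hδ _ hx'
      rw [abs_of_nonneg h2.1]
      exact le_trans h2.2.le (le_max_left _ _)
    · have hz : runMax V s = 0 := by
        rcases not_and_or.1 hb with h|h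
        · exact Real.sSup_of_not_bddAbove h
        · unfold runMax
          rw [Icc_eq_empty h, image_empty, Real.sSup_empty]
      rw [hz]
      exact le_max_right _ _
  have hIbnd : ∀ r, |I r| ≤ K * (F.measure (Ioc 0 r)).toReal := by
    intro r
    haveI : IsFiniteMeasure (F.measure.restrict (Ioc 0 r)) :=
      ⟨by rw [Measure.restrict_apply_univ]; exact hFfin r⟩
    have h := norm_integral_le_of_norm_le_const
      (μ := F.measure.restrict (Ioc 0 r)) (f := fun s => δ (runMax V s)) (C := K)
      (ae_of_all _ fun s => by rw [Real.norm_eq_abs]; exact hgK s)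
    simpa [hIdef, Real.norm_eq_abs, Measure.restrict_apply_univ, measureReal_def] using h
  have hVb : ∀ T ≥ (0:ℝ), BddAbove (V '' Icc 0 T) := by
    intro T hT
    obtain ⟨C, hC⟩ := hXb T hT
    refine ⟨C + K * (F.measure (Ioc 0 T)).toReal, ?_⟩
    rintro v ⟨r, hr, rfl⟩
    rw [hVI r hr.1]
    have h2 : |I r| ≤ K * (F.measure (Ioc 0 T)).toReal := by
      refine le_trans (hIbnd r) (mul_le_mul_of_nonneg_left ?_ hK0)
      exact ENNReal.toReal_mono (hFfin T).ne (measure_mono (Ioc_subset_Ioc_right hr.2))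
    have h3 : X r ≤ C := hC ⟨r, hr, rfl⟩
    have h4 := (abs_le.1 h2).1
    linarith
  have hWx : ∀ s ≥ (0:ℝ), x ≤ runMax V s := by
    intro s hs
    rw [← hV0]
    exact le_csSup (hVb s hs) ⟨0, ⟨le_rfl, hs⟩, rfl⟩
  have hVleW : ∀ r s, 0 ≤ r → r ≤ s → V r ≤ runMax V s :=
    fun r s hr hrs => le_csSup (hVb s (hr.trans hrs)) ⟨r, ⟨hr, hrs⟩, rfl⟩
  have hVne : ∀ T ≥ (0:ℝ), (V '' Icc 0 T).Nonempty :=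
    fun T hT => ⟨V 0, ⟨0, ⟨le_rfl, hT⟩, rfl⟩⟩
  have hWmono : ∀ s T, 0 ≤ s → s ≤ T → runMax V s ≤ runMax V T :=
    fun s T hs hT => csSup_le_csSup (hVb T (hs.trans hT)) (hVne s hs)
      (image_mono (Icc_subset_Icc_right hT))
  have hW0 : runMax V 0 = x := by
    unfold runMax
    rw [Icc_self, image_singleton, csSup_singleton, hV0]
  -- measurability via Wt
  set Wt : ℝ → ℝ := fun s => runMax V (max s 0) with hWtdef
  have hWtmono : Monotone Wt :=
    fun a b hab => hWmono _ _ (le_max_right _ _) (max_le_max hab le_rfl)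
  have hWtmeas : Measurable Wt := hWtmono.measurable
  have hWteq : ∀ s, 0 ≤ s → Wt s = runMax V s := by
    intro s hs
    simp only [hWtdef, max_eq_left hs]
  have hWtx : ∀ s, x ≤ Wt s := fun s => hWx _ (le_max_right _ _)
  have hδWt : ∀ s, 0 ≤ δ (Wt s) ∧ δ (Wt s) < 1 := fun s => hδ _ (hWtx s)
  have hInt : ∀ T, IntegrableOn (fun s => δ (runMax V s)) (Ioc 0 T) F.measure := by
    intro T
    haveI : IsFiniteMeasure (F.measure.restrict (Ioc 0 T)) :=
      ⟨by rw [Measure.restrict_apply_univ]; exact hFfin T⟩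
    constructor
    · refine ((hδmeas.comp hWtmeas).aestronglyMeasurable).congr ?_
      refine (ae_restrict_iff' measurableSet_Ioc).2 (ae_of_all _ fun s hs => ?_)
      show δ (Wt s) = δ (runMax V s)
      rw [hWteq s hs.1.le]
    · apply HasFiniteIntegral.of_bounded (f := fun s => δ (runMax V s)) (C := K)
      exact ae_of_all _ fun s => by rw [Real.norm_eq_abs]; exact hgK s
  have hIdiff : ∀ r T, 0 ≤ r → r ≤ T →
      I T - I r = ∫ s in Ioc r T, δ (runMax V s) ∂F.measure := by
    intro r T h1 h2
    have hu : Ioc (0:ℝ) T = Ioc 0 r ∪ Ioc r T := (Ioc_union_Ioc_eq_Ioc h1 h2).symm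
    have key : I T = I r + ∫ s in Ioc r T, δ (runMax V s) ∂F.measure := by
      show (∫ s in Ioc 0 T, δ (runMax V s) ∂F.measure) = _
      rw [hu]
      exact setIntegral_union (Ioc_disjoint_Ioc_of_le le_rfl) measurableSet_Ioc
        ((hInt T).mono_set (Ioc_subset_Ioc_right h2))
        ((hInt T).mono_set (Ioc_subset_Ioc_left h1))
    linarith
  have hIbounds : ∀ r T, 0 ≤ r → r ≤ T →
      0 ≤ I T - I r ∧ I T - I r ≤ runMax X T - runMax X r := by
    intro r T h1 h2
    rw [hIdiff r T h1 h2]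
    constructor
    · exact setIntegral_nonneg measurableSet_Ioc
        (fun s hs => (hδ _ (hWx s (h1.trans hs.1.le))).1)
    · have hb : (∫ s in Ioc r T, δ (runMax V s) ∂F.measure)
          ≤ ∫ _ in Ioc r T, (1:ℝ) ∂F.measure := by
        refine setIntegral_mono_on ((hInt T).mono_set (Ioc_subset_Ioc_left h1))
          ((integrableOn_const_iff).2 (Or.inr ?_)) measurableSet_Ioc
          (fun s hs => (hδ _ (hWx s (h1.trans hs.1.le))).2.le)
        rw [StieltjesFunction.measure_Ioc]
        exact ENNReal.ofReal_lt_top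
      have hc : (∫ _ in Ioc r T, (1:ℝ) ∂F.measure) = runMax X T - runMax X r := by
        rw [setIntegral_const, smul_eq_mul, mul_one, measureReal_def, StieltjesFunction.measure_Ioc,
          ENNReal.toReal_ofReal (sub_nonneg.2 (F.mono h2)), hF T (h1.trans h2), hF r h1]
      linarith
  -- tax identity
  have hTax : ∀ T, 0 ≤ T → runMax V T = runMax X T - I T := by
    intro T hT
    apply le_antisymm
    · apply csSup_le (hVne T hT)
      rintro v ⟨r, hr, rfl⟩
      rw [hVI r hr.1]
      have h1 := (hIbounds r T hr.1 hr.2).2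
      have h2 := hXleM r r hr.1 le_rfl
      linarith
    · rw [sub_le_iff_le_add]
      apply csSup_le (hXne T hT)
      rintro v ⟨r, hr, rfl⟩
      have h1 := hVleW r T hr.1 hr.2
      have h2 := (hIbounds r T hr.1 hr.2).1
      have h3 := hVI r hr.1
      linarith
  -- continuity of runMax V on [0,∞)
  have hWcont : ContinuousOn (runMax V) (Ici 0) := by
    intro u hu
    rw [Metric.continuousWithinAt_iff]
    intro ε hε
    have h1 := hMcont u hu
    rw [Metric.continuousWithinAt_iff] at h1
    obtain ⟨d0, hd0, hball⟩ := h1 (ε/2) (by linarith)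
    refine ⟨d0, hd0, fun s hs hd => ?_⟩
    have hMd := hball hs hd
    rw [Real.dist_eq] at hMd ⊢
    rcases le_total s u with hsu|hsu
    · have hb := hIbounds s u hs hsu
      have e1 := hTax s hs
      have e2 := hTax u hu
      rw [abs_lt] at hMd ⊢
      constructor <;> linarith
    · have hb := hIbounds u s hu hsu
      have e1 := hTax s hs
      have e2 := hTax u hu
      rw [abs_lt] at hMd ⊢
      constructor <;> linarith
  have hWtcont : Continuous Wt := by
    have := hWcont.comp_continuous (continuous_id.max continuous_const)
      (fun s => le_max_right s 0)
    simpa [hWtdef, Function.comp_def] using this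
  -- density for the W-side
  set d1 : ℝ → ℝ≥0∞ := fun s => ENNReal.ofReal (1 - δ (Wt s)) with hd1def
  have hd1meas : Measurable d1 :=
    ENNReal.measurable_ofReal.comp (measurable_const.sub (hδmeas.comp hWtmeas))
  have hInt1 : ∀ T, IntegrableOn (fun s => 1 - δ (Wt s)) (Ioc 0 T) F.measure := by
    intro T
    haveI : IsFiniteMeasure (F.measure.restrict (Ioc 0 T)) :=
      ⟨by rw [Measure.restrict_apply_univ]; exact hFfin T⟩
    constructor
    · exact (measurable_const.sub (hδmeas.comp hWtmeas)).aestronglyMeasurable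
    · apply HasFiniteIntegral.of_bounded (C := 1)
      refine ae_of_all _ fun s => ?_
      have h := hδWt s
      rw [Real.norm_eq_abs, abs_le]
      constructor <;> linarith [h.1, h.2]
  have hIδWt : ∀ b, 0 ≤ b →
      (∫ s in Ioc 0 b, δ (Wt s) ∂F.measure) = I b := by
    intro b hb
    exact setIntegral_congr_fun measurableSet_Ioc (fun s hs => by rw [hWteq s hs.1.le])
  have hIntδWt : ∀ T, IntegrableOn (fun s => δ (Wt s)) (Ioc 0 T) F.measure := by
    intro T
    haveI : IsFiniteMeasure (F.measure.restrict (Ioc 0 T)) :=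
      ⟨by rw [Measure.restrict_apply_univ]; exact hFfin T⟩
    constructor
    · exact (hδmeas.comp hWtmeas).aestronglyMeasurable
    · apply HasFiniteIntegral.of_bounded (C := 1)
      refine ae_of_all _ fun s => ?_
      have h := hδWt s
      rw [Real.norm_eq_abs, abs_le]
      constructor <;> linarith [h.1, h.2]
  have hIntcF : ∀ T, IntegrableOn (fun _ : ℝ => (1:ℝ)) (Ioc 0 T) F.measure := by
    intro T
    exact (integrableOn_const_iff).2 (Or.inr (hFfin T))
  intro t ht
  have hρ1 : ∀ b ∈ Icc (0:ℝ) t, ((F.measure.restrict (Ioc 0 t)).withDensity d1) (Ioc 0 b)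
      = ENNReal.ofReal (Wt b - Wt 0) := by
    intro b hb
    rw [withDensity_apply _ measurableSet_Ioc, Measure.restrict_restrict measurableSet_Ioc,
      inter_eq_self_of_subset_left (Ioc_subset_Ioc_right hb.2)]
    have hnn : (0:ℝ → ℝ) ≤ᵐ[F.measure.restrict (Ioc 0 b)] fun s => 1 - δ (Wt s) :=
      ae_of_all _ fun s => by
        show (0:ℝ) ≤ 1 - δ (Wt s)
        linarith [(hδWt s).2]
    rw [← ofReal_integral_eq_lintegral_ofReal (hInt1 b) hnn]
    congr 1
    have hsplit : (∫ s in Ioc 0 b, (1 - δ (Wt s)) ∂F.measure)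
        = (∫ _ in Ioc 0 b, (1:ℝ) ∂F.measure) - ∫ s in Ioc 0 b, δ (Wt s) ∂F.measure :=
      integral_sub (hIntcF b) (hIntδWt b)
    have hone : (∫ _ in Ioc 0 b, (1:ℝ) ∂F.measure) = runMax X b - x := by
      rw [setIntegral_const, smul_eq_mul, mul_one, measureReal_def, StieltjesFunction.measure_Ioc,
        ENNReal.toReal_ofReal (sub_nonneg.2 (F.mono hb.1)), hF b hb.1, hF0]
    have htax := hTax b hb.1
    rw [hsplit, hone, hIδWt b hb.1, hWteq b hb.1, hWteq 0 le_rfl, hW0]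
    linarith
  set g : ℝ → ℝ≥0∞ := fun u => ENNReal.ofReal ((1 - δ u)⁻¹) with hgdef
  have hgmeas : Measurable g :=
    ENNReal.measurable_ofReal.comp (measurable_const.sub hδmeas).inv
  have hprod1 : ∀ s ∈ Ioc (0:ℝ) t, d1 s * g (Wt s) = 1 := by
    intro s _
    have h := hδWt s
    simp only [hd1def, hgdef]
    rw [← ENNReal.ofReal_mul (by linarith [h.2] : (0:ℝ) ≤ 1 - δ (Wt s)),
      mul_inv_cancel₀ (by linarith [h.2] : (1:ℝ) - δ (Wt s) ≠ 0), ENNReal.ofReal_one]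
  have R1 : (∫⁻ u in Ioc (Wt 0) (Wt t), g u) = F.measure (Ioc 0 t) :=
    key_lintegral F.measure t ht d1 hd1meas Wt hWtmono hWtcont hρ1 g hgmeas hprod1
  -- y-side
  have hyI := y_integrable x δ hδ y hyrange hy
  have hyid : ∀ b, 0 ≤ b → y b = x + ∫ s in Ioc 0 b, (1 - δ (y s)) := by
    intro b hb
    rw [hy b hb, intervalIntegral.integral_of_le hb]
  have hy0 : y 0 = x := by rw [hy 0 le_rfl, intervalIntegral.integral_same, add_zero]
  have hyIoc : ∀ b, 0 ≤ b → IntegrableOn (fun s => 1 - δ (y s)) (Ioc 0 b) volume :=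
    fun b hb => (intervalIntegrable_iff_integrableOn_Ioc_of_le hb).1 (hyI b hb)
  have hydiff : ∀ A B, 0 ≤ A → A ≤ B → 0 ≤ y B - y A ∧ y B - y A ≤ B - A := by
    intro A B h1 h2
    have e1 := hyid A h1
    have e2 := hyid B (h1.trans h2)
    have hsplit : (∫ s in Ioc 0 B, (1 - δ (y s)))
        = (∫ s in Ioc 0 A, (1 - δ (y s))) + ∫ s in Ioc A B, (1 - δ (y s)) := by
      rw [← Ioc_union_Ioc_eq_Ioc h1 h2]
      exact setIntegral_union (Ioc_disjoint_Ioc_of_le le_rfl) measurableSet_Ioc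
        ((hyIoc B (h1.trans h2)).mono_set (Ioc_subset_Ioc_right h2))
        ((hyIoc B (h1.trans h2)).mono_set (Ioc_subset_Ioc_left h1))
    have hpos : 0 ≤ ∫ s in Ioc A B, (1 - δ (y s)) :=
      setIntegral_nonneg measurableSet_Ioc
        (fun s hs => by linarith [(hδ _ (hyrange s (h1.trans hs.1.le))).2])
    have hle : (∫ s in Ioc A B, (1 - δ (y s))) ≤ ∫ _ in Ioc A B, (1:ℝ) := by
      refine setIntegral_mono_on ((hyIoc B (h1.trans h2)).mono_set (Ioc_subset_Ioc_left h1))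
        ((integrableOn_const_iff).2 (Or.inr measure_Ioc_lt_top)) measurableSet_Ioc
        (fun s hs => by linarith [(hδ _ (hyrange s (h1.trans hs.1.le))).1])
    have hone : (∫ _ in Ioc A B, (1:ℝ)) = B - A := by
      rw [setIntegral_const, smul_eq_mul, mul_one, measureReal_def, Real.volume_Ioc,
        ENNReal.toReal_ofReal (by linarith)]
    constructor <;> linarith
  set yt : ℝ → ℝ := fun s => y (max s 0) with hytdef
  have hytmono : Monotone yt := by
    intro p q hpq
    have h := (hydiff (max p 0) (max q 0) (le_max_right _ _) (max_le_max hpq le_rfl)).1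
    simp only [hytdef]
    linarith
  have hytlip : LipschitzWith 1 yt := by
    rw [lipschitzWith_iff_dist_le_mul]
    have key : ∀ p q : ℝ, p ≤ q → dist (yt p) (yt q) ≤ dist p q := by
      intro p q h
      have h2 := hydiff (max p 0) (max q 0) (le_max_right _ _) (max_le_max h le_rfl)
      have h5 : (0:ℝ) ≤ yt q - yt p := by simp only [hytdef]; linarith [h2.1]
      rw [Real.dist_eq, Real.dist_eq, abs_sub_comm, abs_of_nonneg h5]
      have h3 : |max q 0 - max p 0| ≤ |q - p| := abs_max_sub_max_le_abs q p 0
      have h4 : yt q - yt p ≤ max q 0 - max p 0 := by simp only [hytdef]; linarith [h2.2]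
      calc yt q - yt p ≤ max q 0 - max p 0 := h4
        _ ≤ |max q 0 - max p 0| := le_abs_self _
        _ ≤ |q - p| := h3
        _ = |p - q| := abs_sub_comm _ _
    intro p q
    rw [NNReal.coe_one, one_mul]
    rcases le_total p q with h|h
    · exact key p q h
    · rw [dist_comm, dist_comm p q]
      exact key q p h
  set a := runMax X t - x with hadef
  have ha0 : 0 ≤ a := sub_nonneg.2 (hxM t ht)
  set d2 : ℝ → ℝ≥0∞ := fun s => ENNReal.ofReal (1 - δ (yt s)) with hd2def
  have hd2meas : Measurable d2 :=
    ENNReal.measurable_ofReal.comp (measurable_const.sub (hδmeas.comp hytmono.measurable))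
  have hInt2 : ∀ b, 0 ≤ b → IntegrableOn (fun s => 1 - δ (yt s)) (Ioc 0 b) volume := by
    intro b hb
    refine (hyIoc b hb).congr_fun (fun s hs => ?_) measurableSet_Ioc
    simp only [hytdef, max_eq_left hs.1.le]
  have hρ2 : ∀ b ∈ Icc (0:ℝ) a, ((volume.restrict (Ioc 0 a)).withDensity d2) (Ioc 0 b)
      = ENNReal.ofReal (yt b - yt 0) := by
    intro b hb
    rw [withDensity_apply _ measurableSet_Ioc, Measure.restrict_restrict measurableSet_Ioc,
      inter_eq_self_of_subset_left (Ioc_subset_Ioc_right hb.2)]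
    have hnn : (0:ℝ → ℝ) ≤ᵐ[volume.restrict (Ioc 0 b)] fun s => 1 - δ (yt s) :=
      ae_of_all _ fun s => by
        show (0:ℝ) ≤ 1 - δ (yt s)
        linarith [(hδ (yt s) (hyrange _ (le_max_right s 0))).2]
    rw [hd2def, ← ofReal_integral_eq_lintegral_ofReal (hInt2 b hb.1) hnn]
    congr 1
    have e1 : (∫ s in Ioc 0 b, (1 - δ (yt s))) = ∫ s in Ioc 0 b, (1 - δ (y s)) :=
      setIntegral_congr_fun measurableSet_Ioc (fun s hs => by
        simp only [hytdef, max_eq_left hs.1.le])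
    have e2 := hyid b hb.1
    have e3 : yt b = y b := by simp only [hytdef, max_eq_left hb.1]
    have e4 : yt 0 = y 0 := by simp only [hytdef, max_self]
    rw [e1, e3, e4, hy0]
    linarith
  have hprod2 : ∀ s ∈ Ioc (0:ℝ) a, d2 s * g (yt s) = 1 := by
    intro s _
    have h := hδ (yt s) (hyrange _ (le_max_right s 0))
    simp only [hd2def, hgdef]
    rw [← ENNReal.ofReal_mul (by linarith [h.2] : (0:ℝ) ≤ 1 - δ (yt s)),
      mul_inv_cancel₀ (by linarith [h.2] : (1:ℝ) - δ (yt s) ≠ 0), ENNReal.ofReal_one]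
  have R2 : (∫⁻ u in Ioc (yt 0) (yt a), g u) = volume (Ioc 0 a) :=
    key_lintegral volume a ha0 d2 hd2meas yt hytmono hytlip.continuous hρ2 g hgmeas hprod2
  -- finish
  have hWt0 : Wt 0 = x := by rw [hWteq 0 le_rfl, hW0]
  have hyt0 : yt 0 = x := by
    rw [show yt 0 = y 0 from by simp only [hytdef, max_self], hy0]
  have hyta : yt a = y a := by simp only [hytdef, max_eq_left ha0]
  rw [hWt0, hFM t ht] at R1
  rw [hyt0, hyta, Real.volume_Ioc, sub_zero] at R2
  have R1' : (∫⁻ u in Ioc x (Wt t), g u) = ENNReal.ofReal a := by rw [hadef]; exact R1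
  have R2' : (∫⁻ u in Ioc x (y a), g u) = ENNReal.ofReal a := R2
  have hgone : ∀ u, x ≤ u → (1:ℝ≥0∞) ≤ g u := by
    intro u hu
    have h := hδ u hu
    have hp : (0:ℝ) < 1 - δ u := by linarith [h.2]
    have h1 : (1:ℝ) ≤ (1 - δ u)⁻¹ := by
      calc (1:ℝ) = (1 - δ u) * (1 - δ u)⁻¹ := (mul_inv_cancel₀ hp.ne').symm
        _ ≤ 1 * (1 - δ u)⁻¹ := by
            apply mul_le_mul_of_nonneg_right (by linarith [h.1]) (inv_nonneg.2 hp.le)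
        _ = (1 - δ u)⁻¹ := one_mul _
    simp only [hgdef]
    rw [← ENNReal.ofReal_one]
    exact ENNReal.ofReal_le_ofReal h1
  have key2 : ∀ v1 v2, x ≤ v1 → v1 < v2 →
      (∫⁻ u in Ioc x v1, g u) = ENNReal.ofReal a →
      (∫⁻ u in Ioc x v2, g u) = ENNReal.ofReal a → False := by
    intro v1 v2 h1 h12 e1 e2
    have hsplit : (∫⁻ u in Ioc x v2, g u)
        = (∫⁻ u in Ioc x v1, g u) + ∫⁻ u in Ioc v1 v2, g u := by
      rw [← Ioc_union_Ioc_eq_Ioc h1 h12.le]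
      exact lintegral_union measurableSet_Ioc (Ioc_disjoint_Ioc_of_le le_rfl)
    have hge : ENNReal.ofReal (v2 - v1) ≤ ∫⁻ u in Ioc v1 v2, g u := by
      have h0 : ENNReal.ofReal (v2 - v1) = ∫⁻ _ in Ioc v1 v2, (1:ℝ≥0∞) := by
        rw [setLIntegral_one, Real.volume_Ioc]
      rw [h0]
      exact setLIntegral_mono hgmeas (fun u hu => hgone u (h1.trans hu.1.le))
    have hlt : ENNReal.ofReal a < ENNReal.ofReal a + ENNReal.ofReal (v2 - v1) :=
      ENNReal.lt_add_right ENNReal.ofReal_ne_top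
        (ENNReal.ofReal_pos.2 (by linarith)).ne'
    have hle : ENNReal.ofReal a + ENNReal.ofReal (v2 - v1) ≤ ENNReal.ofReal a := by
      calc ENNReal.ofReal a + ENNReal.ofReal (v2 - v1)
          ≤ (∫⁻ u in Ioc x v1, g u) + ∫⁻ u in Ioc v1 v2, g u := by
            rw [e1]; exact add_le_add_right hge _
        _ = ∫⁻ u in Ioc x v2, g u := hsplit.symm
        _ = ENNReal.ofReal a := e2
    exact absurd hle (not_le.2 hlt)
  have hyax : x ≤ y a := hyrange a ha0
  rcases lt_trichotomy (Wt t) (y a) with h|h|h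
  · exact (key2 _ _ (hWtx t) h R1' R2').elim
  · rw [← hWteq t ht]
    exact h
  · exact (key2 _ _ hyax h R2' R1').elim
end

section
/- Let κ : [x,∞) → [0,∞) be measurable and define δ = κ/(1+κ), so δ : [x,∞) → [0,1). Suppose V solves V_t = X_t - ∫_{(0,t]} δ(V̄_s) dX̄_s where X is càdlàg without upward jumps with X_0 = x and V̄_s = sup_{r≤s} V_r. Then V also solves the alternative equation V_t = X_t - ∫_{(0,t]} κ(V̄_s) dV̄_s. -/
open MeasureTheory Set Filter

/-- A càdlàg function on `[0,∞)` is bounded above on compact intervals. -/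
lemma bddAbove_of_cadlag (X : ℝ → ℝ)
    (hrc : ∀ t ≥ (0:ℝ), ContinuousWithinAt X (Set.Ici t) t)
    (hll : ∀ t > (0:ℝ), ∃ l : ℝ, Tendsto X (nhdsWithin t (Set.Iio t)) (nhds l))
    (t : ℝ) : BddAbove (X '' Set.Icc 0 t) := by
  refine IsCompact.induction_on (isCompact_Icc) (p := fun s => BddAbove (X '' s))
    (by simp) (fun s u hsu hu => hu.mono (Set.image_mono hsu))
    (fun s u hs hu => by show BddAbove (X '' (s ∪ u)); rw [Set.image_union]; exact hs.union hu) (fun y hy => ?_)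
  have hy0 : (0:ℝ) ≤ y := hy.1
  rcases eq_or_lt_of_le hy0 with h0 | h0
  · subst h0
    refine ⟨X ⁻¹' Set.Iio (X 0 + 1), ?_, ⟨X 0 + 1, ?_⟩⟩
    · exact nhdsWithin_mono 0 (fun u hu => hu.1)
        (hrc 0 le_rfl (Iio_mem_nhds (lt_add_one _)))
    · rintro _ ⟨u, hu, rfl⟩
      exact (Set.mem_preimage.mp hu).le
  · obtain ⟨l, hl⟩ := hll y h0
    set c := max (X y) l + 1 with hc
    have h1 : X ⁻¹' Set.Iio c ∈ nhdsWithin y (Set.Ici y) :=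
      hrc y hy0 (Iio_mem_nhds (by have := le_max_left (X y) l; linarith))
    have h2 : X ⁻¹' Set.Iio c ∈ nhdsWithin y (Set.Iio y) :=
      hl (Iio_mem_nhds (by have := le_max_right (X y) l; linarith))
    have h3 : X ⁻¹' Set.Iio c ∈ nhds y := by
      have : X ⁻¹' Set.Iio c ∈ nhdsWithin y (Set.Iio y ∪ Set.Ici y) := by
        rw [nhdsWithin_union]
        exact Filter.mem_sup.mpr ⟨h2, h1⟩
      rwa [Set.Iio_union_Ici, nhdsWithin_univ] at this
    refine ⟨X ⁻¹' Set.Iio c, mem_nhdsWithin_of_mem_nhds h3, ⟨c, ?_⟩⟩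
    rintro _ ⟨u, hu, rfl⟩
    exact (Set.mem_preimage.mp hu).le

theorem alternative_natural_tax_equation
    (x : ℝ) (X : ℝ → ℝ)
    (hX0 : X 0 = x)
    (hrc : ∀ t ≥ (0:ℝ), ContinuousWithinAt X (Set.Ici t) t)
    (hll : ∀ t > (0:ℝ), ∃ l : ℝ, Tendsto X (nhdsWithin t (Set.Iio t)) (nhds l))
    (hnuj : ∀ t > (0:ℝ), ∀ l : ℝ,
      Tendsto X (nhdsWithin t (Set.Iio t)) (nhds l) → X t ≤ l)
    (F : StieltjesFunction ℝ) (hF : ∀ t ≥ (0:ℝ), F t = runMax X t)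
    (κ : ℝ → ℝ) (hκmeas : Measurable κ) (hκ : ∀ z ≥ x, 0 ≤ κ z)
    (δ : ℝ → ℝ) (hδ : ∀ z, δ z = κ z / (1 + κ z))
    -- V solves the natural tax integral equation with rate δ:
    (V : ℝ → ℝ)
    (hV : ∀ t ≥ (0:ℝ), V t = X t - ∫ s in Set.Ioc 0 t, δ (runMax V s) ∂F.measure)
    -- the Lebesgue–Stieltjes measure of the running maximum of V:
    (G : StieltjesFunction ℝ) (hG : ∀ t ≥ (0:ℝ), G t = runMax V t) :
    ∀ t ≥ (0:ℝ), V t = X t - ∫ s in Set.Ioc 0 t, κ (runMax V s) ∂G.measure := by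
  -- notation
  set D : ℝ → ℝ := fun s => δ (runMax V s) with hD
  set A : ℝ → ℝ := fun r => ∫ s in Set.Ioc 0 r, D s ∂F.measure with hA
  -- basic facts about δ
  have hδ01 : ∀ z ≥ x, 0 ≤ δ z ∧ δ z < 1 := by
    intro z hz
    have h1 : 0 ≤ κ z := hκ z hz
    have h2 : (0:ℝ) < 1 + κ z := by linarith
    constructor
    · rw [hδ]; exact div_nonneg h1 h2.le
    · rw [hδ]; rw [div_lt_one h2]; linarith
  -- boundedness of X on compacts, and X ≤ F
  have hXb : ∀ t : ℝ, BddAbove (X '' Set.Icc 0 t) := bddAbove_of_cadlag X hrc hll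
  have hXF : ∀ s ≥ (0:ℝ), X s ≤ F s := by
    intro s hs
    rw [hF s hs]
    exact le_csSup (hXb s) ⟨s, ⟨hs, le_rfl⟩, rfl⟩
  -- V 0 = x and the running max at 0
  have hV0 : V 0 = x := by
    have := hV 0 le_rfl
    simpa [Set.Ioc_self, hX0] using this
  have hM0 : runMax V 0 = x := by
    unfold runMax
    rw [Set.Icc_self, Set.image_singleton, csSup_singleton, hV0]
  have hMx : ∀ s ≥ (0:ℝ), x ≤ runMax V s := by
    intro s hs
    rw [← hG s hs]
    calc x = G 0 := by rw [hG 0 le_rfl, hM0]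
      _ ≤ G s := G.mono hs
  -- measurability
  have hMmeas : Measurable (fun s => runMax V s) := by
    have : (fun s => runMax V s) = fun s => if 0 ≤ s then G s else 0 := by
      funext s
      split_ifs with h
      · exact (hG s h).symm
      · unfold runMax
        rw [Set.Icc_eq_empty (by linarith), Set.image_empty, Real.sSup_empty]
    rw [this]
    exact Measurable.ite (measurableSet_le measurable_const measurable_id')
      G.mono.measurable measurable_const
  have hDmeas : Measurable D := by
    have : D = fun s => κ (runMax V s) / (1 + κ (runMax V s)) := funext fun s => hδ _
    rw [this]
    exact (hκmeas.comp hMmeas).div (measurable_const.add (hκmeas.comp hMmeas))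
  -- integrability of D
  have hFfin : ∀ a b : ℝ, F.measure (Set.Ioc a b) ≠ ⊤ := by
    intro a b; rw [F.measure_Ioc]; exact ENNReal.ofReal_ne_top
  have hconst_int : ∀ a b : ℝ, IntegrableOn (fun _ => (1:ℝ)) (Set.Ioc a b) F.measure :=
    fun a b => integrableOn_const (hFfin a b)
  have hDint : ∀ a b : ℝ, 0 ≤ a → IntegrableOn D (Set.Ioc a b) F.measure := by
    intro a b ha
    refine Integrable.mono' (hconst_int a b) hDmeas.aestronglyMeasurable ?_
    refine (ae_restrict_iff' measurableSet_Ioc).mpr (Eventually.of_forall fun s hs => ?_)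
    obtain ⟨h1, h2⟩ := hδ01 _ (hMx s (ha.trans hs.1.le))
    rw [Real.norm_eq_abs, abs_of_nonneg h1]
    linarith
  have h1subDint : ∀ a b : ℝ, 0 ≤ a →
      IntegrableOn (fun s => 1 - D s) (Set.Ioc a b) F.measure :=
    fun a b ha => (hconst_int a b).sub (hDint a b ha)
  -- additivity of A
  have hAadd : ∀ a b : ℝ, 0 ≤ a → a ≤ b →
      A b = A a + ∫ s in Set.Ioc a b, D s ∂F.measure := by
    intro a b ha hab
    rw [hA]
    simp only
    rw [← Set.Ioc_union_Ioc_eq_Ioc ha hab,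
      setIntegral_union (Set.Ioc_disjoint_Ioc_of_le le_rfl) measurableSet_Ioc
        (hDint 0 a le_rfl) (hDint a b ha)]
  -- increments of A are between 0 and increments of F
  have hconst_eval : ∀ a b : ℝ, a ≤ b →
      (∫ _ in Set.Ioc a b, (1:ℝ) ∂F.measure) = F b - F a := by
    intro a b hab
    rw [setIntegral_const, measureReal_def, F.measure_Ioc, ENNReal.toReal_ofReal (sub_nonneg.mpr (F.mono hab)),
      smul_eq_mul, mul_one]
  have hAincr_nonneg : ∀ a b : ℝ, 0 ≤ a →
      0 ≤ ∫ s in Set.Ioc a b, D s ∂F.measure := by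
    intro a b ha
    exact setIntegral_nonneg measurableSet_Ioc
      (fun s hs => (hδ01 _ (hMx s (ha.trans hs.1.le))).1)
  have hAincr_le : ∀ a b : ℝ, 0 ≤ a → a ≤ b →
      (∫ s in Set.Ioc a b, D s ∂F.measure) ≤ F b - F a := by
    intro a b ha hab
    calc (∫ s in Set.Ioc a b, D s ∂F.measure)
        ≤ ∫ _ in Set.Ioc a b, (1:ℝ) ∂F.measure :=
          setIntegral_mono_on (hDint a b ha) (hconst_int a b) measurableSet_Ioc
            (fun s hs => (hδ01 _ (hMx s (ha.trans hs.1.le))).2.le)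
      _ = F b - F a := hconst_eval a b hab
  have hA0 : A 0 = 0 := by
    rw [hA]; simp [Set.Ioc_self]
  have hAnonneg : ∀ s ≥ (0:ℝ), 0 ≤ A s := by
    intro s hs
    have := hAincr_nonneg 0 s le_rfl
    rw [hAadd 0 s le_rfl hs, hA0, zero_add]
    exact this
  have hAmono : ∀ a b : ℝ, 0 ≤ a → a ≤ b → A a ≤ A b := by
    intro a b ha hab
    rw [hAadd a b ha hab]
    linarith [hAincr_nonneg a b ha]
  have hVX : ∀ s ≥ (0:ℝ), V s = X s - A s := hV
  -- boundedness of V image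
  have hVb : ∀ t ≥ (0:ℝ), BddAbove (V '' Set.Icc 0 t) := by
    intro t ht
    refine ⟨F t, ?_⟩
    rintro _ ⟨u, hu, rfl⟩
    rw [hVX u hu.1]
    have := hAnonneg u hu.1
    have := hXF u hu.1
    have := F.mono hu.2
    linarith
  -- THE KEY LEMMA : G = F - A on [0, ∞)
  have KEY : ∀ t ≥ (0:ℝ), G t = F t - A t := by
    intro t ht
    refine le_antisymm ?_ ?_
    · -- upper bound
      rw [hG t ht]
      refine csSup_le ⟨V 0, ⟨0, ⟨le_rfl, ht⟩, rfl⟩⟩ ?_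
      rintro _ ⟨s, hs, rfl⟩
      rw [hVX s hs.1]
      have h1 := hXF s hs.1
      have h2 : A t - A s ≤ F t - F s := by
        rw [hAadd s t hs.1 hs.2]
        have := hAincr_le s t hs.1 hs.2
        linarith
      linarith
    · -- lower bound
      set S : Set ℝ := {s | s ∈ Set.Icc 0 t ∧ F s = F t} with hS
      have htS : t ∈ S := ⟨⟨ht, le_rfl⟩, rfl⟩
      have hSne : S.Nonempty := ⟨t, htS⟩
      have hSbdd : BddBelow S := ⟨0, fun b hb => hb.1.1⟩
      set s₀ := sInf S with hs₀def
      have hs₀0 : (0:ℝ) ≤ s₀ := le_csInf hSne (fun b hb => hb.1.1)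
      have hs₀t : s₀ ≤ t := csInf_le hSbdd htS
      have hFs₀ : F s₀ = F t := by
        rcases eq_or_lt_of_le hs₀t with h | h
        · rw [h]
        · have hev : ∀ s ∈ Set.Ioo s₀ t, F s = F t := by
            intro s hs
            refine le_antisymm (F.mono hs.2.le) ?_
            obtain ⟨u, huS, hus⟩ := exists_lt_of_csInf_lt hSne hs.1
            rw [← huS.2]
            exact F.mono hus.le
          have h1 : Tendsto F (nhdsWithin s₀ (Set.Ioi s₀)) (nhds (F s₀)) :=
            (F.right_continuous s₀).mono_left (nhdsWithin_mono _ Set.Ioi_subset_Ici_self)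
          have h2 : Tendsto F (nhdsWithin s₀ (Set.Ioi s₀)) (nhds (F t)) := by
            refine Tendsto.congr' ?_ tendsto_const_nhds
            filter_upwards [Ioo_mem_nhdsGT_of_mem ⟨le_rfl, h⟩] with s hs
            exact (hev s hs).symm
          exact tendsto_nhds_unique h1 h2
      have hAeq : A t = A s₀ := by
        rw [hAadd s₀ t hs₀0 hs₀t]
        have hzero : F.measure (Set.Ioc s₀ t) = 0 := by
          rw [F.measure_Ioc, hFs₀, sub_self, ENNReal.ofReal_zero]
        rw [Measure.restrict_eq_zero.mpr hzero, integral_zero_measure, add_zero]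
      have hGs₀ : F s₀ - A s₀ ≤ G s₀ := by
        rw [hG s₀ hs₀0, hF s₀ hs₀0, sub_le_iff_le_add]
        refine csSup_le ⟨X 0, ⟨0, ⟨le_rfl, hs₀0⟩, rfl⟩⟩ ?_
        rintro _ ⟨s, hs, rfl⟩
        have h1 : V s ≤ runMax V s₀ := le_csSup (hVb s₀ hs₀0) ⟨s, hs, rfl⟩
        rw [hVX s hs.1] at h1
        have h2 := hAmono s s₀ hs.1 hs.2
        linarith
      calc F t - A t = F s₀ - A s₀ := by rw [hFs₀, hAeq]
        _ ≤ G s₀ := hGs₀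
        _ = runMax V s₀ := hG s₀ hs₀0
        _ ≤ G t := by rw [← hG s₀ hs₀0]; exact G.mono hs₀t
  -- the density
  set dens : ℝ → NNReal := fun s => Real.toNNReal (1 - D s) with hdens
  have hdensmeas : Measurable dens := (measurable_const.sub hDmeas).real_toNNReal
  set ν : Measure ℝ := F.measure.withDensity (fun s => (dens s : ENNReal)) with hν
  -- the measures G and ν agree on Ioc a b with 0 ≤ a
  have hkey2 : ∀ a b : ℝ, 0 ≤ a → G.measure (Set.Ioc a b) = ν (Set.Ioc a b) := by
    intro a b ha
    rcases le_or_gt b a with hba | hab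
    · rw [Set.Ioc_eq_empty (not_lt.mpr hba)]
      simp
    · have hab' := hab.le
      have hb : (0:ℝ) ≤ b := ha.trans hab'
      have hGab : G b - G a = ∫ s in Set.Ioc a b, (1 - D s) ∂F.measure := by
        rw [KEY b hb, KEY a ha,
          integral_sub (hconst_int a b) (hDint a b ha), hconst_eval a b hab',
          hAadd a b ha hab']
        ring
      have hnn : 0 ≤ᵐ[F.measure.restrict (Set.Ioc a b)] fun s => 1 - D s := by
        refine (ae_restrict_iff' measurableSet_Ioc).mpr (Eventually.of_forall fun s hs => ?_)
        have h9 := (hδ01 _ (hMx s (ha.trans hs.1.le))).2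
        show (0:ℝ) ≤ 1 - D s
        simp only [hD]
        linarith
      rw [G.measure_Ioc, hGab,
        ofReal_integral_eq_lintegral_ofReal (h1subDint a b ha) hnn, hν,
        withDensity_apply _ measurableSet_Ioc]
      exact lintegral_congr fun s => by simp [hdens, ENNReal.ofReal]
  -- restricted measures are equal
  intro t ht
  have hμ1fin : IsFiniteMeasure (G.measure.restrict (Set.Ioc 0 t)) := by
    constructor
    rw [Measure.restrict_apply_univ, G.measure_Ioc]
    exact ENNReal.ofReal_lt_top
  have heq : G.measure.restrict (Set.Ioc 0 t) = ν.restrict (Set.Ioc 0 t) := by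
    refine @Measure.ext_of_Ioc_finite ℝ _ _ _ _ _ _ _ _ hμ1fin ?_ ?_
    · rw [Measure.restrict_apply_univ, Measure.restrict_apply_univ]
      exact hkey2 0 t le_rfl
    · intro a b hab
      rw [Measure.restrict_apply measurableSet_Ioc,
        Measure.restrict_apply measurableSet_Ioc, Set.Ioc_inter_Ioc]
      exact hkey2 _ _ (le_max_right a 0)
  -- final computation
  have hfinal : (∫ s in Set.Ioc 0 t, κ (runMax V s) ∂G.measure)
      = ∫ s in Set.Ioc 0 t, D s ∂F.measure := by
    calc (∫ s in Set.Ioc 0 t, κ (runMax V s) ∂G.measure)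
        = ∫ s in Set.Ioc 0 t, κ (runMax V s) ∂ν := by rw [show (∫ s in Set.Ioc 0 t, κ (runMax V s) ∂G.measure) = ∫ s, κ (runMax V s) ∂(G.measure.restrict (Set.Ioc 0 t)) from rfl, heq]
      _ = ∫ s in Set.Ioc 0 t, (dens s : ℝ) • κ (runMax V s) ∂F.measure := by
          rw [hν]
          exact setIntegral_withDensity_eq_setIntegral_smul hdensmeas _ measurableSet_Ioc
      _ = ∫ s in Set.Ioc 0 t, D s ∂F.measure := by
          refine setIntegral_congr_fun measurableSet_Ioc (fun s hs => ?_)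
          have hz : x ≤ runMax V s := hMx s hs.1.le
          have h1 : 0 ≤ κ (runMax V s) := hκ _ hz
          have h2 : (0:ℝ) < 1 + κ (runMax V s) := by linarith
      -- (dens s : ℝ) = 1 - D s
          have h3 : (dens s : ℝ) = 1 - D s := by
            rw [hdens]
            exact Real.coe_toNNReal _ (by
              have := (hδ01 _ hz).2
              simp only [hD] at this ⊢
              linarith)
          rw [smul_eq_mul, h3]
          simp only [hD, hδ (runMax V s)]
          field_simp
          ring
    done
  rw [hV t ht, hfinal]
end
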